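/- arXiv:1602.08792 — 6 statements merged into one kernel-verified Lean document; each statement's English description precedes it below -/
import Mathlib

section
/- Let $T$ be a semistandard Young tableau of partition shape with entries in the positive integers, and let $u, v$ be positive integers with $v \leq u$. Let $R_u$ be the row index of the new box created when $u$ is column-inserted into $T$, and let $R_v$ be the row index of the new box created when $v$ is column-inserted into the result $[u \to T]$. Then $R_v \leq R_u$. -/
namespace DK

/-- `l` is a partition: weakly decreasing list of positive parts. -/
def IsPartition (l : List ℕ) : Prop :=
  List.Chain' (fun a b => b ≤ a) l ∧ ∀ x ∈ l, 0 < x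

/- ## Column insertion, tableaux as lists of columns -/

/-- Insert a letter into a single (strictly increasing) column, returning the
bumped letter (if any) and the new column. -/
def insertCol (a : ℕ) : List ℕ → Option ℕ × List ℕ
  | [] => (none, [a])
  | x :: xs =>
      if a ≤ x then (some x, a :: xs)
      else
        let r := insertCol a xs
        (r.1, x :: r.2)

/-- Column insertion `[a → T]` for a tableau `T` given as its list of columns. -/
def colInsert (a : ℕ) : List (List ℕ) → List (List ℕ)
  | [] => [[a]]
  | c :: cs =>
      match insertCol a c with
      | (none, c') => c' :: cs
      | (some b, c') => c' :: colInsert b cs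

/-- `R(a → T)`: the (1-indexed) row in which the new box appears in `[a → T]`. -/
def newRow (a : ℕ) : List (List ℕ) → ℕ
  | [] => 1
  | c :: cs =>
      match insertCol a c with
      | (none, _) => c.length + 1
      | (some b, _) => newRow b cs

/-- Insert the letters of a word into `T`, the head of the list first (our word
lists are in reading order: the head is the first letter read, which is the
first letter inserted in `[w → T]`). -/
def insertList : List ℕ → List (List ℕ) → List (List ℕ)
  | [], T => T
  | a :: rest, T => insertList rest (colInsert a T)

def sigmaWordAux : List (List ℕ) → List ℕ → List ℕ
  | _, [] => []
  | T, a :: rest => newRow a T :: sigmaWordAux (colInsert a T) rest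

/-- The word `σ(T) = b_N ⋯ b_1` of row indices of the new boxes in the column
insertion of the word `w` into the empty tableau, in the same positional
encoding as `w` itself. -/
def sigmaWord (w : List ℕ) : List ℕ := sigmaWordAux [] w

/-- Iterated insertion of `a 1, a 2, …, a k` into `T`. -/
def insertUpTo (a : ℕ → ℕ) (T : List (List ℕ)) : ℕ → List (List ℕ)
  | 0 => T
  | k+1 => colInsert (a (k+1)) (insertUpTo a T k)

/-- `T` (a list of columns) is a semistandard tableau of partition shape with
positive entries: columns strictly increasing, column lengths weakly
decreasing, rows weakly increasing. -/
structure IsColTab (T : List (List ℕ)) : Prop where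
  ne : ∀ c ∈ T, c ≠ ([] : List ℕ)
  pos : ∀ c ∈ T, ∀ x ∈ c, 0 < x
  colStrict : ∀ c ∈ T, List.Chain' (· < ·) c
  lenDecr : List.Chain' (fun a b => b ≤ a) (T.map List.length)
  rowWeak : ∀ j i, i < (T.getD (j+1) []).length →
      (T.getD j []).getD i 0 ≤ (T.getD (j+1) []).getD i 0

/- ## Charge (Lascoux–Schützenberger) -/

/-- Reading leftwards (cyclically) from position `start` in `w`, the position
of the first occurrence of the letter `t`. -/
def chooseNext (w : List ℕ) (start t : ℕ) : Option ℕ :=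
  let occ := (List.range w.length).filter (fun p => w.getD p 0 = t)
  ((occ.filter (fun p => p < start)).max?) <|> ((occ.filter (fun p => start < p)).max?)

def extractAux (w : List ℕ) : ℕ → ℕ → ℕ → List ℕ
  | 0, _, _ => []
  | fuel+1, start, t =>
      match chooseNext w start t with
      | none => []
      | some p => p :: extractAux w fuel p (t+1)

/-- Positions of the first extracted standard subword of `w`. -/
def extract (w : List ℕ) : List ℕ :=
  extractAux w w.length w.length 1

def chargeIdxAux : ℕ → ℕ → List ℕ → ℕ
  | _, _, [] => 0
  | idx, prev, p :: ps =>
      let idx' := if p < prev then idx + 1 else idx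
      idx' + chargeIdxAux idx' p ps

/-- Charge of a standard subword given by the positions of its letters
`1, 2, …`: the letter `1` has index `0`, and the letter `r+1` has the index of
`r`, increased by one exactly when `r+1` lies to the left of `r`. -/
def chargePos : List ℕ → ℕ
  | [] => 0
  | p :: ps => chargeIdxAux 0 p ps

def removePositions (w : List ℕ) (ps : List ℕ) : List ℕ :=
  ((List.range w.length).filter (fun p => p ∉ ps)).map (fun p => w.getD p 0)

def chargeFuel : ℕ → List ℕ → ℕ
  | 0, _ => 0
  | fuel+1, w =>
      if w.isEmpty then 0
      else
        let ps := extract w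
        chargePos ps + chargeFuel fuel (removePositions w ps)

/-- The charge of a word of partition weight, obtained by repeatedly extracting
standard subwords and summing their charges. -/
def charge (w : List ℕ) : ℕ := chargeFuel w.length w

/-- The word `w` has positive letters and partition weight. -/
def HasPartitionWeight (w : List ℕ) : Prop :=
  (∀ x ∈ w, 0 < x) ∧ ∀ i, 1 ≤ i → w.count (i+1) ≤ w.count i

/- ## Knuth equivalence -/

/-- Elementary Knuth transformations. -/
inductive KnuthStep : List ℕ → List ℕ → Prop
  | k1 (u v : List ℕ) (x y z : ℕ) (hxy : x ≤ y) (hyz : y < z) :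
      KnuthStep (u ++ x :: z :: y :: v) (u ++ z :: x :: y :: v)
  | k2 (u v : List ℕ) (x y z : ℕ) (hxy : x < y) (hyz : y ≤ z) :
      KnuthStep (u ++ y :: z :: x :: v) (u ++ y :: x :: z :: v)

/-- Knuth equivalence: the equivalence relation generated by the elementary
Knuth transformations. -/
def KnuthEquiv : List ℕ → List ℕ → Prop := Relation.EqvGen KnuthStep

/- ## Skew tableaux as functions `ℕ → ℕ → ℕ` (`0` = empty box) -/

/-- `f` is a semistandard skew tableau of shape `lam - rho` (row `i` occupies
columns `rho_i ≤ j < lam_i`, everything 0-indexed): the support is exactly the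
skew shape, rows weakly increase and columns strictly increase. -/
def IsSkewFn (lam rho : List ℕ) (f : ℕ → ℕ → ℕ) : Prop :=
  (∀ i j, f i j ≠ 0 ↔ (rho.getD i 0 ≤ j ∧ j < lam.getD i 0)) ∧
  (∀ i j j', rho.getD i 0 ≤ j → j ≤ j' → j' < lam.getD i 0 → f i j ≤ f i j') ∧
  (∀ i j, f i j ≠ 0 → f (i+1) j ≠ 0 → f i j < f (i+1) j)

/-- The (row-)reading word of `f`, within the bounding box `R × C`: letters are
read right to left in successive rows, starting with the top row; the head of
the list is the first letter read. -/
def readWordF (R C : ℕ) (f : ℕ → ℕ → ℕ) : List ℕ :=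
  ((List.range R).map (fun i =>
    ((List.range C).reverse.map (f i)).filter (fun x => x ≠ 0))).flatten

/-- The word `w` has weight `mu`: the letter `i+1` occurs `mu_i` times. -/
def wtEq (w : List ℕ) (mu : List ℕ) : Prop := ∀ i, w.count (i+1) = mu.getD i 0

/-- `w` is a lattice permutation: in each final segment of the reading
(i.e. each suffix of the list), `i` occurs at least as often as `i+1`. -/
def IsLattice (w : List ℕ) : Prop :=
  ∀ k i, 1 ≤ i → (w.drop k).count (i+1) ≤ (w.drop k).count i

/- ## Jeu de taquin -/

/-- Update a two-variable function at one point. -/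
def upd (f : ℕ → ℕ → ℕ) (i j v : ℕ) : ℕ → ℕ → ℕ :=
  fun i' j' => if i' = i ∧ j' = j then v else f i' j'

/-- One upper jeu de taquin slide: the pawn starts at `(i, j)` and repeatedly
exchanges with the smaller of the letters to its right and below it (the one
below in case of ties), until neither exists.  Returns the resulting tableau
together with the final position of the hole. -/
def slideU : ℕ → (ℕ → ℕ → ℕ) → ℕ → ℕ → ((ℕ → ℕ → ℕ) × ℕ × ℕ)
  | 0, f, i, j => (f, i, j)
  | fuel+1, f, i, j =>
      let r := f i (j+1)
      let b := f (i+1) j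
      if b = 0 ∧ r = 0 then (f, i, j)
      else if b ≠ 0 ∧ (r = 0 ∨ b ≤ r) then
        slideU fuel (upd (upd f i j b) (i+1) j 0) (i+1) j
      else
        slideU fuel (upd (upd f i j r) i (j+1) 0) i (j+1)

/-- One lower jeu de taquin slide: the pawn starts at `(i, j)` and repeatedly
exchanges with the larger of the letters to its left and above it (the one
above in case of ties), until neither exists. -/
def slideL : ℕ → (ℕ → ℕ → ℕ) → ℕ → ℕ → (ℕ → ℕ → ℕ)
  | 0, f, _, _ => f
  | fuel+1, f, i, j =>
      let l := if j = 0 then 0 else f i (j-1)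
      let u := if i = 0 then 0 else f (i-1) j
      if l = 0 ∧ u = 0 then f
      else if u ≠ 0 ∧ (l = 0 ∨ l ≤ u) then
        slideL fuel (upd (upd f i j u) (i-1) j 0) (i-1) j
      else
        slideL fuel (upd (upd f i j l) i (j-1) 0) i (j-1)

/-- Rectification of a skew tableau of shape `lam - rho`: repeatedly slide into
the inner corner at the end of the lowest row with nonzero inner shape,
updating the shape along the way, until the inner shape is empty. -/
def rectify (B : ℕ) : ℕ → List ℕ → List ℕ → (ℕ → ℕ → ℕ) → (ℕ → ℕ → ℕ)
  | 0, _, _, f => f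
  | fuel+1, lam, rho, f =>
      match ((List.range lam.length).filter (fun i => 0 < rho.getD i 0)).max? with
      | none => f
      | some i =>
          let s := slideU B f i (rho.getD i 0 - 1)
          rectify B fuel (lam.set s.2.1 s.2.2) (rho.set i (rho.getD i 0 - 1)) s.1

/-- The jeu de taquin rectification `jdt(T)` of a skew tableau of shape
`lam - rho`. -/
def rect (lam rho : List ℕ) (f : ℕ → ℕ → ℕ) : ℕ → ℕ → ℕ :=
  rectify (lam.length + lam.headD 0 + 1) (rho.sum + 1) lam rho f

/-- The tableau function associated to a list of columns. -/
def colsToFn (cols : List (List ℕ)) : ℕ → ℕ → ℕ :=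
  fun i j => (cols.getD j []).getD i 0


/- ## Polynomial / fermionic machinery -/

/-- The Gaussian binomial coefficient `[p+m choose m]_t` as a polynomial,
defined by the `q`-Pascal recurrence. -/
noncomputable def gauss : ℕ → ℕ → Polynomial ℤ
  | _, 0 => 1
  | 0, _ + 1 => 1
  | p + 1, m + 1 => gauss p (m + 1) + Polynomial.X ^ (p + 1) * gauss (p + 1) m
  termination_by p m => p + m

/-- `n(μ) = Σ_i (i-1) μ_i`. -/
def nstat (mu : List ℕ) : ℕ := ∑ i ∈ Finset.range mu.length, i * mu.getD i 0

/-- `Q_i(λ) = Σ_j min(i, λ_j)`. -/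
def Qi (i : ℕ) (l : List ℕ) : ℤ := ((l.map (fun x => min i x)).sum : ℤ)

/-- `Σ_{i,j} min(i,j) m_i(λ) m_j(κ)`, computed as `Σ_{x ∈ λ, y ∈ κ} min(x,y)`. -/
def pairMin (l k : List ℕ) : ℤ :=
  ((l.map (fun x => (k.map (fun y => min x y)).sum)).sum : ℤ)

/-- Vacancy numbers `p_i^{(a)}` of a configuration `nu` (where `nu 0 = μ` is
the multiplicity data and `nu a = []` for `a ≥ n`). -/
def pVac (nu : ℕ → List ℕ) (a i : ℕ) : ℤ :=
  Qi i (nu (a-1)) - 2 * Qi i (nu a) + Qi i (nu (a+1))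

/-- Admissible `L(μ)`-configurations of weight `lam` in type `A_{n-1}`. -/
def AdmConf (n : ℕ) (mu lam : List ℕ) : Set (ℕ → List ℕ) :=
  {nu | (∀ a, IsPartition (nu a)) ∧ nu 0 = mu ∧ (∀ a, n ≤ a → nu a = []) ∧
    (∀ a, 1 ≤ a → a ≤ n - 1 → (nu a).sum = (lam.drop a).sum) ∧
    (∀ a i, 1 ≤ a → a ≤ n - 1 → 1 ≤ i → 0 ≤ pVac nu a i)}

/-- The cocharge `cc(ν) = ½ Σ_{a,b∈I₀} (α_a,α_b) Σ_{i,j} min(i,j) m_i^{(a)} m_j^{(b)}`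
of a configuration, written without the factor `½` by collecting the diagonal
terms (`(α_a,α_a) = 2`) and the adjacent terms (`(α_a,α_{a±1}) = -1`). -/
def ccConf (n : ℕ) (nu : ℕ → List ℕ) : ℤ :=
  (∑ a ∈ Finset.Icc 1 (n-1), pairMin (nu a) (nu a)) -
  (∑ a ∈ Finset.Icc 1 (n-2), pairMin (nu a) (nu (a+1)))

/-- The set of semistandard tableaux of straight shape `lam` and weight `mu`,
as functions. -/
def TabSet (lam mu : List ℕ) : Set (ℕ → ℕ → ℕ) :=
  {f | IsSkewFn lam [] f ∧ wtEq (readWordF lam.length (lam.headD 0) f) mu}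

/-- The Kostka polynomial `K_{λ,μ}(t)`, via the Lascoux–Schützenberger charge
formula `K_{λ,μ}(t) = Σ_{T ∈ Tab(λ,μ)} t^{c(T)}`. -/
noncomputable def kostka (lam mu : List ℕ) : Polynomial ℤ :=
  ∑ᶠ f ∈ TabSet lam mu,
    (Polynomial.X : Polynomial ℤ) ^ charge (readWordF lam.length (lam.headD 0) f)

/-- The Littlewood–Richardson coefficient `c^ν_{λ',λ''}`: the number of
semistandard skew tableaux of shape `ν - λ'` and weight `λ''` whose reading
word is a lattice permutation. -/
noncomputable def lrCoeff (l' l'' nu : List ℕ) : ℕ :=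
  {f : ℕ → ℕ → ℕ | IsSkewFn nu l' f ∧
    IsLattice (readWordF nu.length (nu.headD 0) f) ∧
    wtEq (readWordF nu.length (nu.headD 0) f) l''}.ncard

/-- The fermionic formula `M(μ, λ; t)` of type `A_{n-1}`, as a Laurent
polynomial: the sum over admissible configurations of
`t^{cc(ν)} Π_{(a,i)} [p_i^{(a)} + m_i^{(a)}, m_i^{(a)}]_t`. -/
noncomputable def fermionicM (n : ℕ) (mu lam : List ℕ) : LaurentPolynomial ℤ :=
  ∑ᶠ nu ∈ AdmConf n mu lam,
    LaurentPolynomial.T (ccConf n nu) *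
      ∏ᶠ a ∈ Set.Icc 1 (n-1), ∏ᶠ i ∈ {i : ℕ | 1 ≤ i},
        Polynomial.toLaurent (gauss ((pVac nu a i).toNat) ((nu a).count i))

/- ## Rigged configurations (with riggings as multisets of strings) -/

/-- `Q_i` for a multiset of parts. -/
def QiM (i : ℕ) (s : Multiset ℕ) : ℤ := ((s.map (fun x => min i x)).sum : ℤ)

/-- The underlying configuration of a rigged configuration: `ν^{(0)} = μ`, and
`ν^{(a)}` is the multiset of string lengths of `RC a` for `a ≥ 1`. -/
def nuOf (mu : List ℕ) (RC : ℕ → Multiset (ℕ × ℤ)) (a : ℕ) : Multiset ℕ :=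
  if a = 0 then (mu : Multiset ℕ) else (RC a).map Prod.fst

/-- Vacancy numbers of a rigged configuration. -/
def pRC (mu : List ℕ) (RC : ℕ → Multiset (ℕ × ℤ)) (a i : ℕ) : ℤ :=
  QiM i (nuOf mu RC (a-1)) - 2 * QiM i (nuOf mu RC a) + QiM i (nuOf mu RC (a+1))

/-- Basic validity of a rigged configuration in type `A_{n-1}`: nothing outside
`1 ≤ a ≤ n-1`, and all string lengths are positive. -/
def RCvalid (n : ℕ) (RC : ℕ → Multiset (ℕ × ℤ)) : Prop :=
  RC 0 = 0 ∧ (∀ a, n ≤ a → RC a = 0) ∧ ∀ a s, s ∈ RC a → 1 ≤ s.1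

end DK


namespace DK

lemma newRow_le_head (a : ℕ) : ∀ T : List (List ℕ),
    List.Chain' (fun a b => b ≤ a) (T.map List.length) →
    newRow a T ≤ (T.map List.length).headD 0 + 1 := by
  intro T
  induction T generalizing a with
  | nil => intro _; simp [newRow]
  | cons c cs ih =>
    intro hch
    rcases h : insertCol a c with ⟨b?, c'⟩
    cases b? with
    | none => simp [newRow, h]
    | some b =>
      have hch' : List.Chain' (fun a b => b ≤ a) (cs.map List.length) := by
        exact hch.tail
      have h1 := ih b hch'
      have h2 : (cs.map List.length).headD 0 ≤ c.length := by
        cases cs with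
        | nil => simp
        | cons c2 cs2 =>
          have h : List.IsChain (fun a b => b ≤ a) ((c :: c2 :: cs2).map List.length) := hch
          simp only [List.map_cons, List.isChain_cons_cons] at h
          simpa using h.1
      simp only [newRow, h, List.map_cons, List.headD_cons]
      omega

lemma bump_lemma : ∀ (c : List ℕ) (u v : ℕ), v ≤ u →
    ∃ b', (insertCol v (insertCol u c).2).1 = some b' ∧
      ∀ b, (insertCol u c).1 = some b → b' ≤ b := by
  intro c
  induction c with
  | nil =>
    intro u v hvu
    refine ⟨u, ?_, by simp [insertCol]⟩
    simp [insertCol, hvu]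
  | cons x xs ih =>
    intro u v hvu
    by_cases hux : u ≤ x
    · refine ⟨u, ?_, ?_⟩
      · simp [insertCol, hux, hvu]
      · intro b hb
        simp [insertCol, hux] at hb
        omega
    · by_cases hvx : v ≤ x
      · refine ⟨x, ?_, ?_⟩
        · simp [insertCol, hux, hvx]
        · intro b hb
          simp only [insertCol, if_neg hux] at hb
          -- b is bumped from xs by u, so u ≤ b
          have hub : u ≤ b := by
            clear ih
            induction xs generalizing b with
            | nil => simp [insertCol] at hb
            | cons y ys ih2 =>
              by_cases huy : u ≤ y
              · simp [insertCol, huy] at hb; omega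
              · simp only [insertCol, if_neg huy] at hb
                exact ih2 b hb
          omega
      · obtain ⟨b', hb', hle⟩ := ih u v hvu
        refine ⟨b', ?_, ?_⟩
        · simp [insertCol, hux, hvx]; exact hb'
        · intro b hb
          simp only [insertCol, if_neg hux] at hb
          exact hle b hb

lemma newRow_mono_aux : ∀ (T : List (List ℕ)),
    List.Chain' (fun a b => b ≤ a) (T.map List.length) →
    ∀ u v, v ≤ u → newRow v (colInsert u T) ≤ newRow u T := by
  intro T
  induction T with
  | nil =>
    intro _ u v hvu
    simp [colInsert, newRow, insertCol, hvu]
  | cons c cs ih =>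
    intro hch u v hvu
    have hch' : List.Chain' (fun a b => b ≤ a) (cs.map List.length) := by
      exact hch.tail
    obtain ⟨b', hb', hle⟩ := bump_lemma c u v hvu
    rcases h : insertCol u c with ⟨b?, c'⟩
    rw [h] at hb' hle
    rcases h3 : insertCol v c' with ⟨b2?, c2⟩
    rw [h3] at hb'
    simp only at hb'
    subst hb'
    cases b? with
    | none =>
      have h1 : colInsert u (c :: cs) = c' :: cs := by
        simp [colInsert, h]
      have h2 : newRow u (c :: cs) = c.length + 1 := by
        simp [newRow, h]
      rw [h1, h2]
      have h4 : newRow v (c' :: cs) = newRow b' cs := by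
        simp [newRow, h3]
      rw [h4]
      have h5 := newRow_le_head b' cs hch'
      have h6 : (cs.map List.length).headD 0 ≤ c.length := by
        cases cs with
        | nil => simp
        | cons c2 cs2 =>
          have h : List.IsChain (fun a b => b ≤ a) ((c :: c2 :: cs2).map List.length) := hch
          simp only [List.map_cons, List.isChain_cons_cons] at h
          simpa using h.1
      omega
    | some b =>
      have h1 : colInsert u (c :: cs) = c' :: colInsert b cs := by
        simp [colInsert, h]
      have h2 : newRow u (c :: cs) = newRow b cs := by
        simp [newRow, h]
      rw [h1, h2]
      have h4 : newRow v (c' :: colInsert b cs) = newRow b' (colInsert b cs) := by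
        simp [newRow, h3]
      rw [h4]
      exact ih hch' b b' (hle b rfl)

end DK

/-- Lemma 1.2.1: if `v ≤ u`, the new box created by column-inserting `v` into
`[u → T]` is in a row no lower than the new box created by column-inserting
`u` into `T`. -/
theorem colInsert_newRow_mono (T : List (List ℕ)) (hT : DK.IsColTab T)
    (u v : ℕ) (hv : 0 < v) (huv : v ≤ u) :
    DK.newRow v (DK.colInsert u T) ≤ DK.newRow u T :=
  DK.newRow_mono_aux T hT.lenDecr u v huv
end

section
/- Let $w = a_m a_{m-1} \cdots a_1$ be a weakly increasing word read right to left (i.e., $a_m \leq a_{m-1} \leq \cdots \leq a_1$), and let $T$ be a semistandard tableau of partition shape. For each $k$, let $R_k$ be the row index of the new box created when $a_k$ is column-inserted into $[a_{k-1} \cdots a_1 \to T]$. Then $R_m \leq R_{m-1} \leq \cdots \leq R_1$, i.e., the sequence of row indices $R_m \cdots R_1$ is itself a row word. -/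
namespace DK

/-- Column `c` dominates (entrywise, with longer length) column `d` to its right. -/
def Dom (c d : List ℕ) : Prop :=
  d.length ≤ c.length ∧ ∀ k < d.length, c.getD k 0 ≤ d.getD k 0

/-- Local tableau invariant on lists of columns. -/
def Tab (T : List (List ℕ)) : Prop :=
  List.Chain' Dom T ∧ ∀ c ∈ T, c ≠ ([] : List ℕ) ∧ List.Chain' (· < ·) c

lemma getD_set' (l : List ℕ) (i v n : ℕ) :
    (l.set i v).getD n 0 = if i = n ∧ i < l.length then v else l.getD n 0 := by
  by_cases hn : n < l.length
  · rw [List.getD_eq_getElem _ _ (by simpa using hn), List.getD_eq_getElem _ _ hn,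
      List.getElem_set]
    by_cases h : i = n <;> simp [h, hn]
  · rw [List.getD_eq_default _ _ (by simpa using not_lt.1 hn),
      List.getD_eq_default _ _ (not_lt.1 hn)]
    have : ¬ (i = n ∧ i < l.length) := by rintro ⟨rfl, h⟩; exact hn h
    simp [this]

lemma getD_append' (l l2 : List ℕ) (n : ℕ) (h : n < l.length) :
    (l ++ l2).getD n 0 = l.getD n 0 := by
  rw [List.getD_eq_getElem _ _ (by simp; omega), List.getD_eq_getElem _ _ h]
  exact List.getElem_append_left _

lemma getD_append_last (l : List ℕ) (b : ℕ) :
    (l ++ [b]).getD l.length 0 = b := by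
  rw [List.getD_eq_getElem _ _ (by simp)]
  simp

lemma getD_mem' (l : List ℕ) (n : ℕ) (h : n < l.length) : l.getD n 0 ∈ l := by
  rw [List.getD_eq_getElem _ _ h]; exact List.getElem_mem h

/-- Case analysis for `insertCol`. -/
lemma insertCol_cases (a : ℕ) (c : List ℕ) :
    (insertCol a c = (none, c ++ [a]) ∧ ∀ x ∈ c, x < a) ∨
    (∃ i, i < c.length ∧ insertCol a c = (some (c.getD i 0), c.set i a) ∧
      a ≤ c.getD i 0 ∧ ∀ k < i, c.getD k 0 < a) := by
  induction c with
  | nil => left; exact ⟨rfl, by simp⟩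
  | cons x xs ih =>
    by_cases hx : a ≤ x
    · right
      exact ⟨0, by simp, by simp [insertCol, hx], by simpa using hx, by omega⟩
    · rcases ih with ⟨heq, hall⟩ | ⟨i, hi, heq, hab, hklt⟩
      · left
        constructor
        · simp [insertCol, if_neg hx, heq]
        · intro y hy
          rcases List.mem_cons.1 hy with rfl | hy
          · omega
          · exact hall y hy
      · right
        refine ⟨i + 1, by simpa using hi, ?_, by simpa using hab, ?_⟩
        · simp only [insertCol, if_neg hx, heq]
          simp
        · intro k hk
          match k with
          | 0 => simpa using (by omega : x < a)
          | k + 1 => simpa using hklt k (by omega)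

lemma colInsert_cons (a : ℕ) (c : List ℕ) (cs : List (List ℕ)) :
    colInsert a (c :: cs) = match insertCol a c with
      | (none, c') => c' :: cs
      | (some b, c') => c' :: colInsert b cs := rfl

lemma newRow_cons (a : ℕ) (c : List ℕ) (cs : List (List ℕ)) :
    newRow a (c :: cs) = match insertCol a c with
      | (none, _) => c.length + 1
      | (some b, _) => newRow b cs := rfl

lemma colInsert_eq_none {a : ℕ} {c c' : List ℕ} (cs : List (List ℕ))
    (heq : insertCol a c = (none, c')) : colInsert a (c :: cs) = c' :: cs := by
  rw [colInsert_cons, heq]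

lemma colInsert_eq_some {a b : ℕ} {c c' : List ℕ} (cs : List (List ℕ))
    (heq : insertCol a c = (some b, c')) :
    colInsert a (c :: cs) = c' :: colInsert b cs := by
  rw [colInsert_cons, heq]

lemma newRow_eq_none {a : ℕ} {c c' : List ℕ} (cs : List (List ℕ))
    (heq : insertCol a c = (none, c')) : newRow a (c :: cs) = c.length + 1 := by
  rw [newRow_cons, heq]

lemma newRow_eq_some {a b : ℕ} {c c' : List ℕ} (cs : List (List ℕ))
    (heq : insertCol a c = (some b, c')) : newRow a (c :: cs) = newRow b cs := by
  rw [newRow_cons, heq]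

lemma colInsert_ne_nil (a : ℕ) (T : List (List ℕ)) : colInsert a T ≠ [] := by
  cases T with
  | nil => simp [colInsert]
  | cons c cs =>
    rw [colInsert_cons]
    rcases h : insertCol a c with ⟨_ | b, c'⟩ <;> simp [h]

/-- The spec of the new head column after inserting `b` into a list of columns with head `e`. -/
def InsSpec (b : ℕ) (e h : List ℕ) : Prop :=
  (h = e ++ [b] ∧ ∀ x ∈ e, x < b) ∨
  (∃ q, q < e.length ∧ h = e.set q b ∧ b ≤ e.getD q 0 ∧ ∀ k < q, e.getD k 0 < b)

lemma insSpec_head (T : List (List ℕ)) (b : ℕ) :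
    InsSpec b (T.headD []) ((colInsert b T).headD []) := by
  cases T with
  | nil => left; exact ⟨rfl, by simp⟩
  | cons c cs =>
    rcases insertCol_cases b c with ⟨heq, hall⟩ | ⟨i, hi, heq, hab, hklt⟩
    · rw [colInsert_eq_none cs heq]; left; exact ⟨rfl, hall⟩
    · rw [colInsert_eq_some cs heq]; right; exact ⟨i, hi, rfl, hab, hklt⟩

lemma dom_nil (c : List ℕ) : Dom c [] := ⟨Nat.zero_le _, by simp⟩

/-- Domination transfers through column insertion. -/
lemma dom_trans {c e h : List ℕ} {a b i : ℕ}
    (hi : i < c.length) (hb : c.getD i 0 = b) (hab : a ≤ b)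
    (hklt : ∀ k < i, c.getD k 0 < a)
    (hdom : Dom c e) (hins : InsSpec b e h) : Dom (c.set i a) h := by
  rcases hins with ⟨rfl, hall⟩ | ⟨q, hq, rfl, hbq, hqlt⟩
  · -- append case
    have hle : e.length ≤ i := by
      by_contra hcon
      push_neg at hcon
      have h1 : c.getD i 0 ≤ e.getD i 0 := hdom.2 i hcon
      have h2 : e.getD i 0 < b := hall _ (getD_mem' e i hcon)
      omega
    constructor
    · simp only [List.length_append, List.length_set, List.length_cons, List.length_nil]
      omega
    · intro k hk
      simp only [List.length_append, List.length_cons, List.length_nil] at hk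
      rw [getD_set']
      by_cases hke : k < e.length
      · rw [getD_append' _ _ _ hke]
        rw [if_neg (by omega)]
        exact hdom.2 k hke
      · have hk' : k = e.length := by omega
        subst hk'
        rw [getD_append_last]
        by_cases hki : i = e.length
        · rw [if_pos ⟨hki, hi⟩]; exact hab
        · rw [if_neg (by omega)]
          have := hklt e.length (by omega)
          omega
  · -- set case
    have hqi : q ≤ i := by
      by_contra hcon
      push_neg at hcon
      have h1 : c.getD i 0 ≤ e.getD i 0 := hdom.2 i (by omega)
      have h2 : e.getD i 0 < b := hqlt i hcon
      omega
    constructor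
    · simpa using hdom.1
    · intro k hk
      simp only [List.length_set] at hk
      rw [getD_set' c i a k, getD_set' e q b k]
      have hck : c.getD k 0 ≤ e.getD k 0 := hdom.2 k hk
      by_cases hik : i = k
      · rw [if_pos (⟨hik, hi⟩ : i = k ∧ i < c.length)]
        by_cases hqk : q = k
        · rw [if_pos (⟨hqk, hq⟩ : q = k ∧ q < e.length)]; exact hab
        · rw [if_neg (fun hcon => hqk hcon.1)]
          have h2 : c.getD k 0 = b := hik ▸ hb
          omega
      · rw [if_neg (fun hcon => hik hcon.1)]
        by_cases hqk : q = k
        · rw [if_pos (⟨hqk, hq⟩ : q = k ∧ q < e.length)]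
          have := hklt k (by omega)
          omega
        · rw [if_neg (fun hcon => hqk hcon.1)]
          exact hck

lemma strict_append {d : List ℕ} {b : ℕ} (hd : List.Chain' (· < ·) d)
    (hall : ∀ x ∈ d, x < b) : List.Chain' (· < ·) (d ++ [b]) := by
  refine List.IsChain.append hd (List.isChain_singleton b) ?_
  intro x hx y hy
  simp only [List.head?_cons, Option.mem_def, Option.some.injEq] at hy
  subst hy
  exact hall x (List.mem_of_mem_getLast? hx)

lemma strict_set {d : List ℕ} {p b : ℕ} (hd : List.Chain' (· < ·) d)
    (hp : p < d.length) (hb : b ≤ d.getD p 0) (hlt : ∀ k < p, d.getD k 0 < b) :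
    List.Chain' (· < ·) (d.set p b) := by
  have hpair := (List.isChain_iff_pairwise.1 hd)
  have hmono : ∀ (i j : ℕ) (hij : i < j) (hj : j < d.length), d[i]'(by omega) < d[j]'hj := by
    intro i j hij hj
    exact List.pairwise_iff_getElem.1 hpair i j (by omega) hj hij
  refine List.isChain_iff_getElem.2 ?_
  intro i hi2
  simp only [List.length_set] at hi2
  simp only [List.get_eq_getElem, List.getElem_set]
  by_cases h1 : p = i
  · rw [if_pos h1, if_neg (by omega)]
    subst h1
    have hbp : b ≤ d[p]'hp := by rw [← List.getD_eq_getElem d 0 hp]; exact hb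
    exact lt_of_le_of_lt hbp (hmono p (p+1) (by omega) (by omega))
  · rw [if_neg h1]
    by_cases h2 : p = i + 1
    · rw [if_pos h2]
      have := hlt i (by omega)
      rw [List.getD_eq_getElem d 0 (by omega)] at this
      exact this
    · rw [if_neg h2]
      exact hmono i (i+1) (by omega) (by omega)

/-- `colInsert` preserves the tableau invariant. -/
lemma tab_colInsert : ∀ T, Tab T → ∀ b, Tab (colInsert b T) := by
  intro T
  induction T with
  | nil =>
    intro _ b
    constructor
    · simp [colInsert]; exact List.isChain_singleton _
    · intro c hc
      simp only [colInsert, List.mem_singleton] at hc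
      subst hc
      exact ⟨by simp, List.isChain_singleton b⟩
  | cons c cs ih =>
    intro hT b
    have hchain := hT.1
    have hcols := hT.2
    have hTcs : Tab cs := ⟨(List.isChain_cons.1 hchain).2, fun d hd => hcols d (by simp [hd])⟩
    have hc := hcols c (by simp)
    rcases insertCol_cases b c with ⟨heq, hall⟩ | ⟨i, hi, heq, hab, hklt⟩
    · rw [colInsert_eq_none cs heq]
      constructor
      · refine List.isChain_cons.2 ⟨?_, (List.isChain_cons.1 hchain).2⟩
        intro e he
        have hdom : Dom c e := (List.isChain_cons.1 hchain).1 e he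
        have hlen := hdom.1
        refine ⟨le_trans hdom.1 (by simp), ?_⟩
        intro k hk
        rw [getD_append' _ _ _ (by omega)]
        exact hdom.2 k hk
      · intro d hd
        rcases List.mem_cons.1 hd with rfl | hd
        · exact ⟨by simp, strict_append hc.2 hall⟩
        · exact hcols d (by simp [hd])
    · rw [colInsert_eq_some cs heq]
      have hV := ih hTcs (c.getD i 0)
      constructor
      · refine List.isChain_cons.2 ⟨?_, hV.1⟩
        intro h' hh'
        have hne := colInsert_ne_nil (c.getD i 0) cs
        have hh'' : h' = (colInsert (c.getD i 0) cs).headD [] := by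
          cases hV' : colInsert (c.getD i 0) cs with
          | nil => exact absurd hV' hne
          | cons x t => rw [hV'] at hh'; simp at hh'; simp [hV', hh']
        subst hh''
        refine dom_trans hi rfl hab hklt ?_ (insSpec_head cs (c.getD i 0))
        cases cs with
        | nil => exact dom_nil c
        | cons e es =>
          exact (List.isChain_cons.1 hchain).1 e (by simp)
      · intro d hd
        rcases List.mem_cons.1 hd with rfl | hd
        · exact ⟨List.ne_nil_of_length_pos (by simpa using by omega),
            strict_set hc.2 hi hab hklt⟩
        · exact hV.2 d hd

/-- Entry condition controlling the row of the new box along a bump path. -/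
def Enter (x q : ℕ) (V : List (List ℕ)) : Prop :=
  ∀ e ∈ V.head?, x ≤ e.getD q 0 ∨ e.length ≤ q

lemma newRow_le : ∀ V, Tab V → ∀ x q, Enter x q V → newRow x V ≤ q + 1 := by
  intro V
  induction V with
  | nil => intro _ x q _; simp [newRow]
  | cons e es ih =>
    intro hV x q hent
    have hes : Tab es := ⟨(List.isChain_cons.1 hV.1).2, fun d hd => hV.2 d (by simp [hd])⟩
    have hent' := hent e (by simp)
    rcases insertCol_cases x e with ⟨heq, hall⟩ | ⟨r, hr, heq, hxr, hklt⟩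
    · rw [newRow_eq_none es heq]
      have hle : e.length ≤ q := by
        rcases hent' with hq | hq
        · by_contra hcon
          push_neg at hcon
          have := hall _ (getD_mem' e q hcon)
          omega
        · exact hq
      omega
    · rw [newRow_eq_some es heq]
      have hrq : r ≤ q := by
        rcases hent' with hq | hq
        · by_contra hcon
          push_neg at hcon
          have := hklt q (by omega)
          omega
        · omega
      have : newRow (e.getD r 0) es ≤ r + 1 := by
        refine ih hes (e.getD r 0) r ?_
        intro g hg
        cases es with
        | nil => simp at hg
        | cons g' gs =>
          simp only [List.head?_cons, Option.mem_def, Option.some.injEq] at hg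
          subst hg
          have hdom : Dom e g' := (List.isChain_cons.1 hV.1).1 g' (by simp)
          by_cases hgl : r < g'.length
          · exact Or.inl (hdom.2 r hgl)
          · exact Or.inr (by omega)
      omega

/-- Key monotonicity: inserting a smaller-or-equal letter afterwards creates a
new box in a weakly smaller row. -/
lemma newRow_mono : ∀ T, Tab T → ∀ a a', a' ≤ a →
    newRow a' (colInsert a T) ≤ newRow a T := by
  intro T
  induction T with
  | nil =>
    intro _ a a' h
    simp [colInsert, newRow, newRow_cons, insertCol, h]
  | cons d ds ih =>
    intro hT a a' haa
    have hds : Tab ds := ⟨(List.isChain_cons.1 hT.1).2, fun c hc => hT.2 c (by simp [hc])⟩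
    rcases insertCol_cases a d with ⟨heq, hall⟩ | ⟨i, hi, heq, hab, hklt⟩
    · rw [colInsert_eq_none ds heq, newRow_eq_none ds heq]
      rcases insertCol_cases a' (d ++ [a]) with ⟨heq', hall'⟩ | ⟨q, hq, heq', _, _⟩
      · exact absurd (hall' a (by simp)) (by omega)
      · rw [newRow_eq_some ds heq']
        have hq' : q ≤ d.length := by
          simp only [List.length_append, List.length_cons, List.length_nil] at hq
          omega
        have : newRow ((d ++ [a]).getD q 0) ds ≤ q + 1 := by
          refine newRow_le ds hds _ q ?_
          intro e he
          cases ds with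
          | nil => simp at he
          | cons e' es =>
            simp only [List.head?_cons, Option.mem_def, Option.some.injEq] at he
            subst he
            have hdom : Dom d e' := (List.isChain_cons.1 hT.1).1 e' (by simp)
            have hlen := hdom.1
            by_cases hel : q < e'.length
            · left
              rw [getD_append' _ _ _ (by omega)]
              exact hdom.2 q hel
            · right; omega
        omega
    · rw [colInsert_eq_some ds heq, newRow_eq_some ds heq]
      rcases insertCol_cases a' (d.set i a) with ⟨heq', hall'⟩ | ⟨i', hi', heq', hab', hklt'⟩
      · exfalso
        have hmem : a ∈ d.set i a := by
          have hga : (d.set i a).getD i 0 = a := by rw [getD_set', if_pos ⟨rfl, hi⟩]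
          have hm := getD_mem' (d.set i a) i (by simpa using hi)
          rwa [hga] at hm
        have := hall' a hmem
        omega
      · rw [newRow_eq_some (colInsert (d.getD i 0) ds) heq']
        have hii : i' ≤ i := by
          by_contra hcon
          push_neg at hcon
          have := hklt' i hcon
          rw [getD_set', if_pos ⟨rfl, hi⟩] at this
          omega
        have hble : (d.set i a).getD i' 0 ≤ d.getD i 0 := by
          rw [getD_set']
          by_cases hii' : i = i'
          · rw [if_pos ⟨hii', hi⟩]; exact hab
          · rw [if_neg (by omega)]
            have := hklt i' (by omega)
            omega
        exact ih hds (d.getD i 0) _ hble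

lemma tab_of_isColTab (T : List (List ℕ)) (hT : IsColTab T) : Tab T := by
  constructor
  · refine List.isChain_iff_getElem.2 ?_
    intro j hj
    have hj' : j + 1 < T.length := by omega
    have hlen : (T.get ⟨j+1, hj'⟩).length ≤ (T.get ⟨j, by omega⟩).length := by
      have := List.isChain_iff_getElem.1 ((List.isChain_map List.length).1 hT.lenDecr) j
        (by simpa using hj)
      simpa using this
    refine ⟨hlen, ?_⟩
    intro k hk
    have h1 : T.getD j [] = T.get ⟨j, by omega⟩ := by
      rw [List.getD_eq_getElem _ _ (by omega)]; simp [List.get_eq_getElem]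
    have h2 : T.getD (j+1) [] = T.get ⟨j+1, hj'⟩ := by
      rw [List.getD_eq_getElem _ _ hj']; simp [List.get_eq_getElem]
    have := hT.rowWeak j k (by rw [h2]; exact hk)
    rwa [h1, h2] at this
  · intro c hc
    exact ⟨hT.ne c hc, hT.colStrict c hc⟩

end DK

/-- Corollary 1.2.2: successively column-inserting the letters of a row word
`a_m ≤ a_{m-1} ≤ ⋯ ≤ a_1` into a tableau of partition shape produces new
boxes whose row indices again form a row word `R_m ≤ R_{m-1} ≤ ⋯ ≤ R_1`. -/
theorem row_insert_rows (m : ℕ) (a : ℕ → ℕ) (T : List (List ℕ))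
    (hT : DK.IsColTab T)
    (hpos : ∀ k, 1 ≤ k → k ≤ m → 0 < a k)
    (hrow : ∀ k, 1 ≤ k → k < m → a (k + 1) ≤ a k) :
    ∀ k, 1 ≤ k → k < m →
      DK.newRow (a (k + 1)) (DK.insertUpTo a T k) ≤
        DK.newRow (a k) (DK.insertUpTo a T (k - 1)) := by
  have tabk : ∀ k, DK.Tab (DK.insertUpTo a T k) := by
    intro k
    induction k with
    | zero => exact DK.tab_of_isColTab T hT
    | succ n ihn => exact DK.tab_colInsert _ ihn _
  intro k hk1 hkm
  obtain ⟨n, rfl⟩ : ∃ n, k = n + 1 := ⟨k - 1, by omega⟩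
  have h1 : DK.insertUpTo a T (n + 1) = DK.colInsert (a (n + 1)) (DK.insertUpTo a T n) := rfl
  have h2 : n + 1 - 1 = n := by omega
  rw [h1, h2]
  exact DK.newRow_mono _ (tabk n) _ _ (hrow (n + 1) (by omega) hkm)
end

section
/- Let $w = x_t x_{t-1} \cdots x_1 z$ be a word and $T$ a semistandard tableau of partition shape. Suppose $z > x$ for every letter $x$ appearing in $T$ and for every $x \in \{x_1, \ldots, x_t\}$. For each $k$, let $R_k$ be the row index of the new box when $x_k$ is column-inserted into $[x_{k-1}\cdots x_1 \to T]$, and let $R'_k$ be the row index of the new box when $x_k$ is column-inserted into $[x_{k-1}\cdots x_1 z \to T]$. Then $R_k \geq R'_k$ for all $k$. -/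
namespace DKAux
open DK

/-- `c` dominates the next column `p ≥ c` pointwise with `len c ≤ len p`. -/
def Dom (p c : List ℕ) : Prop :=
  c.length ≤ p.length ∧ ∀ i < c.length, p.getD i 0 ≤ c.getD i 0

def Tab : List (List ℕ) → Prop
  | [] => True
  | c :: cs => List.Chain' (· < ·) c ∧ Dom c (cs.headD []) ∧ Tab cs

lemma getD_lt_of_chain' {c : List ℕ} (h : List.Chain' (· < ·) c) {i j : ℕ}
    (hij : i < j) (hj : j < c.length) : c.getD i 0 < c.getD j 0 := by
  have hp := (List.isChain_iff_pairwise).1 h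
  rw [List.pairwise_iff_getElem] at hp
  have hi : i < c.length := lt_trans hij hj
  rw [List.getD_eq_getElem _ _ hi, List.getD_eq_getElem _ _ hj]
  exact hp i j hi hj hij

lemma getD_mono_of_chain' {c : List ℕ} (h : List.Chain' (· < ·) c) {i j : ℕ}
    (hij : i ≤ j) (hj : j < c.length) : c.getD i 0 ≤ c.getD j 0 := by
  rcases lt_or_eq_of_le hij with h' | h'
  · exact le_of_lt (getD_lt_of_chain' h h' hj)
  · rw [h']

lemma ic_all_lt {a : ℕ} : ∀ {c : List ℕ}, (∀ x ∈ c, x < a) →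
    insertCol a c = (none, c ++ [a])
  | [], _ => by simp [insertCol]
  | x :: xs, h => by
    have hx : ¬ a ≤ x := by
      have := h x (List.mem_cons_self); omega
    have ih := ic_all_lt (c := xs) (fun y hy => h y (List.mem_cons_of_mem _ hy))
    simp [insertCol, hx, ih]

lemma ic_none {a : ℕ} : ∀ {c : List ℕ} {d}, insertCol a c = (none, d) →
    d = c ++ [a] ∧ ∀ x ∈ c, x < a
  | [], d, h => by
    simp [insertCol] at h; simp [h]
  | x :: xs, d, h => by
    by_cases hx : a ≤ x
    · simp [insertCol, hx] at h
    · simp only [insertCol, if_neg hx, Prod.mk.injEq] at h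
      obtain ⟨h1, h2⟩ := h
      obtain ⟨hd, hall⟩ := ic_none (c := xs)
        (d := (insertCol a xs).2) (by rw [← h1])
      constructor
      · rw [← h2, hd]; simp
      · intro y hy
        rcases List.mem_cons.1 hy with rfl | hy
        · omega
        · exact hall y hy

lemma ic_some {a : ℕ} : ∀ {c : List ℕ} {b d}, insertCol a c = (some b, d) →
    ∃ r, r < c.length ∧ b = c.getD r 0 ∧ d = c.set r a ∧
      (∀ i < r, c.getD i 0 < a) ∧ a ≤ b
  | [], b, d, h => by simp [insertCol] at h
  | x :: xs, b, d, h => by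
    by_cases hx : a ≤ x
    · simp only [insertCol, if_pos hx, Prod.mk.injEq, Option.some.injEq] at h
      obtain ⟨rfl, rfl⟩ := h
      exact ⟨0, by simp, by simp, by simp, by omega, hx⟩
    · simp only [insertCol, if_neg hx, Prod.mk.injEq] at h
      obtain ⟨h1, h2⟩ := h
      obtain ⟨r, hr, hb, hd, hlow, hab⟩ := ic_some (c := xs)
        (b := b) (d := (insertCol a xs).2) (by rw [← h1])
      refine ⟨r + 1, by simpa using hr, by simpa using hb, ?_, ?_, hab⟩
      · rw [← h2, hd]; simp
      · intro i hi
        cases i with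
        | zero => simpa using (by omega : x < a)
        | succ i => simpa using hlow i (by omega)

lemma ic_app_none {a z : ℕ} (haz : a ≤ z) : ∀ {c : List ℕ},
    (insertCol a c).1 = none → insertCol a (c ++ [z]) = (some z, (insertCol a c).2)
  | [], _ => by simp [insertCol, haz]
  | x :: xs, h => by
    by_cases hx : a ≤ x
    · simp [insertCol, hx] at h
    · simp only [insertCol, if_neg hx, List.cons_append] at h ⊢
      rw [ic_app_none haz (c := xs) h]

lemma ic_app_some {a z : ℕ} : ∀ {c : List ℕ} {b},
    (insertCol a c).1 = some b →
    insertCol a (c ++ [z]) = (some b, (insertCol a c).2 ++ [z])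
  | [], b, h => by simp [insertCol] at h
  | x :: xs, b, h => by
    by_cases hx : a ≤ x
    · simp [insertCol, hx] at h ⊢; simp [h]
    · simp only [insertCol, if_neg hx, List.cons_append] at h ⊢
      rw [ic_app_some (c := xs) h]

lemma ic_snd_mem {a v : ℕ} : ∀ {c : List ℕ}, v ∈ (insertCol a c).2 →
    v = a ∨ v ∈ c
  | [], h => by simpa [insertCol] using h
  | x :: xs, h => by
    by_cases hx : a ≤ x
    · simp [insertCol, hx] at h
      rcases h with h | h
      · exact Or.inl h
      · exact Or.inr (List.mem_cons_of_mem _ h)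
    · simp only [insertCol, if_neg hx, List.mem_cons] at h
      rcases h with h | h
      · exact Or.inr (h ▸ List.mem_cons_self)
      · rcases ic_snd_mem (c := xs) h with h | h
        · exact Or.inl h
        · exact Or.inr (List.mem_cons_of_mem _ h)

lemma ic_fst_mem {a b : ℕ} : ∀ {c : List ℕ}, (insertCol a c).1 = some b → b ∈ c
  | [], h => by simp [insertCol] at h
  | x :: xs, h => by
    by_cases hx : a ≤ x
    · simp [insertCol, hx] at h
      exact h ▸ List.mem_cons_self
    · simp only [insertCol, if_neg hx] at h
      exact List.mem_cons_of_mem _ (ic_fst_mem (c := xs) h)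

lemma strict_append {c : List ℕ} {a : ℕ} (h : List.Chain' (· < ·) c)
    (ha : ∀ x ∈ c, x < a) : List.Chain' (· < ·) (c ++ [a]) := by
  unfold List.Chain' at h ⊢
  rw [List.isChain_iff_pairwise] at h ⊢
  rw [List.pairwise_append]
  exact ⟨h, List.pairwise_singleton _ _, fun x hx y hy => by
    simp at hy; exact hy ▸ ha x hx⟩

lemma strict_set {c : List ℕ} {r a : ℕ} (h : List.Chain' (· < ·) c)
    (hr : r < c.length) (hlow : ∀ i < r, c.getD i 0 < a)
    (hhigh : a ≤ c.getD r 0) : List.Chain' (· < ·) (c.set r a) := by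
  unfold List.Chain' at h ⊢
  rw [List.isChain_iff_pairwise, List.pairwise_iff_getElem] at h ⊢
  intro i j hi hj hij
  simp only [List.length_set] at hi hj
  rw [List.getElem_set, List.getElem_set]
  rcases eq_or_ne r i with rfl | hri
  · rw [if_pos rfl, if_neg (by omega)]
    have : c.getD r 0 < c.getD j 0 := getD_lt_of_chain'
      (List.isChain_iff_pairwise.2 (List.pairwise_iff_getElem.2 h)) hij hj
    rw [List.getD_eq_getElem _ _ hj] at this
    omega
  · rw [if_neg hri]
    rcases eq_or_ne r j with rfl | hrj
    · rw [if_pos rfl]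
      have := hlow i hij
      rw [List.getD_eq_getElem _ _ hi] at this
      exact this
    · rw [if_neg hrj]; exact h i j hi hj hij

def AllLt (z : ℕ) (S : List (List ℕ)) : Prop := ∀ c ∈ S, ∀ v ∈ c, v < z

lemma allLt_colInsert {z : ℕ} : ∀ {S : List (List ℕ)} {a : ℕ},
    AllLt z S → a < z → AllLt z (colInsert a S)
  | [], a, _, ha => by
    intro c hc v hv
    simp [colInsert] at hc
    subst hc; simp at hv; omega
  | c :: cs, a, hS, ha => by
    intro c' hc' v hv
    rcases hic : insertCol a c with ⟨o, d⟩
    have hd : ∀ v ∈ d, v < z := by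
      intro v hv
      rcases ic_snd_mem (a := a) (c := c) (by rw [hic]; exact hv) with rfl | h
      · exact ha
      · exact hS c (List.mem_cons_self) v h
    cases o with
    | none =>
      simp only [colInsert, hic] at hc'
      rcases List.mem_cons.1 hc' with rfl | hc'
      · exact hd v hv
      · exact hS c' (List.mem_cons_of_mem _ hc') v hv
    | some b =>
      simp only [colInsert, hic] at hc'
      rcases List.mem_cons.1 hc' with rfl | hc'
      · exact hd v hv
      · have hb : b < z := hS c (List.mem_cons_self) b
          (ic_fst_mem (a := a) (c := c) (by rw [hic]))
        exact allLt_colInsert (S := cs)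
          (fun c hc => hS c (List.mem_cons_of_mem _ hc)) hb c' hc' v hv

/-- The key preservation lemma, with the previous (already updated) column
`p` carried along. -/
lemma insert_keeps_tab : ∀ (cs : List (List ℕ)) (b r0 : ℕ) (p : List ℕ),
    Tab cs →
    List.Chain' (· < ·) p → r0 < p.length → p.getD r0 0 ≤ b →
    (r0 < (cs.headD []).length → b ≤ (cs.headD []).getD r0 0) →
    Dom p (cs.headD []) →
    Tab (colInsert b cs) ∧ Dom p ((colInsert b cs).headD [])
  | [], b, r0, p, _, hp, hr0, hpb, _, _ => by
    constructor
    · show Tab [[b]]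
      exact ⟨List.isChain_singleton _, ⟨by simp, by simp⟩, trivial⟩
    · show Dom p [b]
      refine ⟨by simp; omega, ?_⟩
      intro i hi
      simp only [List.length_cons, List.length_nil] at hi
      have hi0 : i = 0 := by omega
      subst hi0
      simp only [List.getD_cons_zero]
      exact le_trans (getD_mono_of_chain' hp (Nat.zero_le _) hr0) hpb
  | c2 :: rest, b, r0, p, htab, hp, hr0, hpb, hb4, hb5 => by
    obtain ⟨hc2, hdom, hrest⟩ := htab
    simp only [List.headD_cons] at hb4 hb5
    rcases hic : insertCol b c2 with ⟨o, d⟩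
    cases o with
    | none =>
      obtain ⟨rfl, hall⟩ := ic_none hic
      have hlen : c2.length ≤ r0 := by
        by_contra h
        have h1 := hb4 (by omega)
        have hmem : c2.getD r0 0 ∈ c2 := by
          rw [List.getD_eq_getElem _ _ (by omega)]
          exact List.getElem_mem _
        have h2 := hall (c2.getD r0 0) hmem
        omega
      constructor
      · simp only [colInsert, hic]
        refine ⟨strict_append hc2 hall, ⟨?_, ?_⟩, hrest⟩
        · simp only [List.headD_cons, List.length_append, List.length_cons,
            List.length_nil]
          have := hdom.1
          omega
        · intro i hi
          have hi' : i < c2.length := lt_of_lt_of_le hi hdom.1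
          rw [List.getD_append _ _ _ _ hi']
          exact hdom.2 i hi
      · simp only [colInsert, hic, List.headD_cons]
        refine ⟨by simp; omega, ?_⟩
        intro i hi
        simp only [List.length_append, List.length_cons, List.length_nil] at hi
        rcases lt_or_ge i c2.length with h | h
        · rw [List.getD_append _ _ _ _ h]
          exact hb5.2 i h
        · have hieq : i = c2.length := by omega
          subst hieq
          have : (c2 ++ [b]).getD c2.length 0 = b := by
            rw [List.getD_eq_getElem _ _ (by simp)]
            simp
          rw [this]
          exact le_trans (getD_mono_of_chain' hp hlen hr0) hpb
    | some b2 =>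
      obtain ⟨r1, hr1, hb2, rfl, hlow, hbb2⟩ := ic_some hic
      have hr1r0 : r1 ≤ r0 := by
        by_contra h
        rcases lt_or_ge r0 c2.length with h' | h'
        · have := hlow r0 (by omega)
          have := hb4 h'
          omega
        · omega
      have hstrict : List.Chain' (· < ·) (c2.set r1 b) :=
        strict_set hc2 hr1 hlow (hb2 ▸ hbb2)
      have hsetle : ∀ i < c2.length, (c2.set r1 b).getD i 0 ≤ c2.getD i 0 := by
        intro i hi
        rw [List.getD_eq_getElem _ _ (by simpa using hi),
          List.getD_eq_getElem _ _ hi, List.getElem_set]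
        split
        · rename_i h; subst h
          rw [List.getD_eq_getElem _ _ hr1] at hb2
          omega
        · exact le_refl _
      have ih := insert_keeps_tab rest b2 r1 (c2.set r1 b) hrest hstrict
        (by simpa using hr1)
        (by rw [List.getD_eq_getElem _ _ (by simpa using hr1)]
            simp [List.getElem_set]
            rw [List.getD_eq_getElem _ _ hr1] at hb2
            omega)
        (fun h => by rw [hb2]; exact hdom.2 r1 h)
        ⟨by simpa using hdom.1, fun i hi =>
          le_trans (hsetle i (lt_of_lt_of_le hi hdom.1)) (hdom.2 i hi)⟩
      constructor
      · simp only [colInsert, hic]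
        exact ⟨hstrict, ih.2, ih.1⟩
      · simp only [colInsert, hic, List.headD_cons]
        refine ⟨by simpa using hb5.1, ?_⟩
        intro i hi
        simp only [List.length_set] at hi
        rw [List.getD_eq_getElem (c2.set r1 b) 0 (by simpa using hi),
          List.getElem_set]
        split
        · rename_i h; subst h
          exact le_trans (getD_mono_of_chain' hp hr1r0 hr0) hpb
        · rw [← List.getD_eq_getElem c2 0 hi]
          exact hb5.2 i hi

lemma tab_colInsert {S : List (List ℕ)} {a : ℕ} (h : Tab S) :
    Tab (colInsert a S) := by
  cases S with
  | nil =>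
    show Tab [[a]]
    exact ⟨List.isChain_singleton _, ⟨by simp, by simp⟩, trivial⟩
  | cons c cs =>
    obtain ⟨hc, hdom, hcs⟩ := h
    rcases hic : insertCol a c with ⟨o, d⟩
    cases o with
    | none =>
      obtain ⟨rfl, hall⟩ := ic_none hic
      simp only [colInsert, hic]
      refine ⟨strict_append hc hall, ⟨?_, ?_⟩, hcs⟩
      · simp only [List.length_append, List.length_cons, List.length_nil]
        have := hdom.1
        omega
      · intro i hi
        have hi' : i < c.length := lt_of_lt_of_le hi hdom.1
        rw [List.getD_append _ _ _ _ hi']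
        exact hdom.2 i hi
    | some b =>
      obtain ⟨r, hr, hb, rfl, hlow, hab⟩ := ic_some hic
      have hstrict : List.Chain' (· < ·) (c.set r a) :=
        strict_set hc hr hlow (hb ▸ hab)
      have hsetle : ∀ i < c.length, (c.set r a).getD i 0 ≤ c.getD i 0 := by
        intro i hi
        rw [List.getD_eq_getElem _ _ (by simpa using hi),
          List.getD_eq_getElem _ _ hi, List.getElem_set]
        split
        · rename_i h; subst h
          rw [List.getD_eq_getElem _ _ hr] at hb
          omega
        · exact le_refl _
      have ih := insert_keeps_tab cs b r (c.set r a) hcs hstrict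
        (by simpa using hr)
        (by rw [List.getD_eq_getElem _ _ (by simpa using hr)]
            simp [List.getElem_set]
            rw [List.getD_eq_getElem _ _ hr] at hb
            omega)
        (fun h => hb ▸ hdom.2 r h)
        ⟨by simpa using hdom.1, fun i hi =>
          le_trans (hsetle i (lt_of_lt_of_le hi hdom.1)) (hdom.2 i hi)⟩
      simp only [colInsert, hic]
      exact ⟨hstrict, ih.2, ih.1⟩

lemma isColTab_tail {c : List ℕ} {cs : List (List ℕ)}
    (h : IsColTab (c :: cs)) : IsColTab cs := by
  refine ⟨fun d hd => h.ne d (List.mem_cons_of_mem _ hd),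
    fun d hd => h.pos d (List.mem_cons_of_mem _ hd),
    fun d hd => h.colStrict d (List.mem_cons_of_mem _ hd),
    ?_, ?_⟩
  · have := h.lenDecr
    simp only [List.map_cons] at this
    exact this.tail
  · intro j i hi
    have := h.rowWeak (j + 1) i (by simpa using hi)
    simpa using this

lemma tab_of_isColTab : ∀ {T : List (List ℕ)}, IsColTab T → Tab T
  | [], _ => trivial
  | c :: cs, h => by
    refine ⟨h.colStrict c (List.mem_cons_self), ?_,
      tab_of_isColTab (isColTab_tail h)⟩
    cases cs with
    | nil => exact ⟨Nat.zero_le _, fun i hi => absurd hi (by simp)⟩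
    | cons d rest =>
      constructor
      · have := h.lenDecr
        simp only [List.map_cons, List.Chain', List.isChain_cons_cons] at this
        simpa using this.1
      · intro i hi
        have := h.rowWeak 0 i (by simpa using hi)
        simpa using this

inductive AddZ (z : ℕ) : List (List ℕ) → List (List ℕ) → Prop
  | here (c : List ℕ) (cs : List (List ℕ)) : AddZ z (c :: cs) ((c ++ [z]) :: cs)
  | nil : AddZ z [] [[z]]
  | cons (c : List ℕ) {cs cs' : List (List ℕ)} :
      AddZ z cs cs' → AddZ z (c :: cs) (c :: cs')

lemma addZ_step {z : ℕ} : ∀ {S S' : List (List ℕ)}, AddZ z S S' →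
    ∀ a, a < z → Tab S → AllLt z S →
    newRow a S' ≤ newRow a S ∧ AddZ z (colInsert a S) (colInsert a S') := by
  intro S S' h
  induction h with
  | nil =>
    intro a ha _ _
    have hic : insertCol a [z] = (some z, [a]) := by
      simp [insertCol, le_of_lt ha]
    constructor
    · simp [newRow, hic]
    · simp only [colInsert, hic]
      exact AddZ.cons [a] AddZ.nil
  | here c cs =>
    intro a ha htab hall
    rcases hic : insertCol a c with ⟨o, d⟩
    cases o with
    | some b =>
      have hic' : insertCol a (c ++ [z]) = (some b, d ++ [z]) := by
        have := ic_app_some (z := z) (c := c) (b := b) (by rw [hic])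
        rwa [hic] at this
      constructor
      · simp [newRow, hic, hic']
      · simp only [colInsert, hic, hic']
        exact AddZ.here d _
    | none =>
      obtain ⟨rfl, hlt⟩ := ic_none hic
      have hic' : insertCol a (c ++ [z]) = (some z, c ++ [a]) := by
        have := ic_app_none (le_of_lt ha) (c := c) (by rw [hic])
        rwa [hic] at this
      cases cs with
      | nil =>
        constructor
        · simp [newRow, hic, hic']
        · simp only [colInsert, hic, hic']
          exact AddZ.cons _ AddZ.nil
      | cons c2 rest =>
        have hz2 : insertCol z c2 = (none, c2 ++ [z]) :=
          ic_all_lt (fun v hv =>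
            hall c2 (List.mem_cons_of_mem _ (List.mem_cons_self)) v hv)
        have hlen : c2.length ≤ c.length := by
          have := htab.2.1.1
          simpa using this
        constructor
        · simp only [newRow, hic, hic', hz2]
          omega
        · simp only [colInsert, hic, hic', hz2]
          exact AddZ.cons _ (AddZ.here c2 rest)
  | cons c h ih =>
    intro a ha htab hall
    rcases hic : insertCol a c with ⟨o, d⟩
    cases o with
    | none =>
      constructor
      · simp [newRow, hic]
      · simp only [colInsert, hic]
        exact AddZ.cons d h
    | some b =>
      have hb : b < z := hall c (List.mem_cons_self) b
        (ic_fst_mem (a := a) (c := c) (by rw [hic]))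
      obtain ⟨h1, h2⟩ := ih b hb htab.2.2
        (fun d hd => hall d (List.mem_cons_of_mem _ hd))
      constructor
      · simpa [newRow, hic] using h1
      · simp only [colInsert, hic]
        exact AddZ.cons d h2

end DKAux

/-- Lemma 1.2.3: if `z` is strictly larger than every letter of `T` and every
`x_k`, then inserting `z` first can only weakly decrease the row indices of
the new boxes created by the subsequent insertions of `x_1, …, x_t`. -/
theorem insert_big_letter_first (t : ℕ) (x : ℕ → ℕ) (z : ℕ)
    (T : List (List ℕ)) (hT : DK.IsColTab T)
    (hpos : ∀ k, 1 ≤ k → k ≤ t → 0 < x k)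
    (hzT : ∀ c ∈ T, ∀ v ∈ c, v < z)
    (hzx : ∀ k, 1 ≤ k → k ≤ t → x k < z) :
    ∀ k, 1 ≤ k → k ≤ t →
      DK.newRow (x k) (DK.insertUpTo x (DK.colInsert z T) (k - 1)) ≤
        DK.newRow (x k) (DK.insertUpTo x T (k - 1)) := by
  intro k hk1 hkt
  have key : ∀ m, m ≤ t →
      DKAux.Tab (DK.insertUpTo x T m) ∧ DKAux.AllLt z (DK.insertUpTo x T m) ∧
      DKAux.AddZ z (DK.insertUpTo x T m) (DK.insertUpTo x (DK.colInsert z T) m) := by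
    intro m
    induction m with
    | zero =>
      intro _
      refine ⟨DKAux.tab_of_isColTab hT, hzT, ?_⟩
      cases T with
      | nil => exact DKAux.AddZ.nil
      | cons c cs =>
        have hic : DK.insertCol z c = (none, c ++ [z]) :=
          DKAux.ic_all_lt (fun v hv => hzT c (List.mem_cons_self) v hv)
        simp only [DK.insertUpTo, DK.colInsert, hic]
        exact DKAux.AddZ.here c cs
    | succ m ih =>
      intro hm
      obtain ⟨htab, hall, hadd⟩ := ih (by omega)
      have hx : x (m + 1) < z := hzx (m + 1) (by omega) hm
      refine ⟨DKAux.tab_colInsert htab, DKAux.allLt_colInsert hall hx, ?_⟩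
      exact (DKAux.addZ_step hadd (x (m + 1)) hx htab hall).2
  obtain ⟨htab, hall, hadd⟩ := key (k - 1) (by omega)
  exact (DKAux.addZ_step hadd (x k) (hzx k hk1 hkt) htab hall).1
end

section
/- For nonnegative integers $p$ and $m$, the generating function of partitions fitting inside a $p \times m$ box (i.e., partitions with at most $m$ parts, each part at most $p$), weighted by size, equals the Gaussian binomial coefficient $\binom{p+m}{m}_t = \frac{(t^{p+1}-1)\cdots(t^{p+m}-1)}{(t-1)\cdots(t^m-1)}$. -/
namespace BoxAux

open Polynomial

/-- Finset of partitions with at most `m` parts, each at most `p`. -/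
def boxF : ℕ → ℕ → Finset (List ℕ)
  | _, 0 => {[]}
  | p, m+1 => insert []
      ((Finset.range p).biUnion (fun i => (boxF (i+1) m).image (fun l => (i+1) :: l)))

lemma parts_le_head {a : ℕ} {t : List ℕ}
    (h : List.Chain' (fun a b => b ≤ a) (a :: t)) : ∀ x ∈ t, x ≤ a := by
  replace h := List.isChain_iff_pairwise.mp h
  exact (List.pairwise_cons.mp h).1

lemma mem_boxF : ∀ (m p : ℕ) (l : List ℕ),
    l ∈ boxF p m ↔ DK.IsPartition l ∧ l.length ≤ m ∧ ∀ x ∈ l, x ≤ p := by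
  intro m
  induction m with
  | zero =>
    intro p l
    simp only [boxF, Finset.mem_singleton, Nat.le_zero, List.length_eq_zero_iff]
    constructor
    · rintro rfl; exact ⟨⟨List.isChain_nil, by simp⟩, rfl, by simp⟩
    · rintro ⟨_, rfl, _⟩; rfl
  | succ m ih =>
    intro p l
    simp only [boxF, Finset.mem_insert, Finset.mem_biUnion, Finset.mem_range,
      Finset.mem_image]
    constructor
    · rintro (rfl | ⟨i, hi, t, ht, rfl⟩)
      · exact ⟨⟨List.isChain_nil, by simp⟩, by simp, by simp⟩
      · obtain ⟨⟨hc, hpos⟩, hlen, hle⟩ := (ih (i+1) t).mp ht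
        refine ⟨⟨List.isChain_cons.mpr ⟨?_, hc⟩, ?_⟩, by simpa using hlen, ?_⟩
        · intro h hh; exact hle h (List.mem_of_mem_head? hh)
        · intro x hx
          rcases List.mem_cons.mp hx with rfl | hx
          · exact Nat.succ_pos i
          · exact hpos x hx
        · intro x hx
          rcases List.mem_cons.mp hx with rfl | hx
          · exact hi
          · exact le_trans (hle x hx) hi
    · rintro ⟨⟨hc, hpos⟩, hlen, hle⟩
      match l with
      | [] => exact Or.inl rfl
      | a :: t =>
        right
        have ha : 0 < a := hpos a (by simp)
        obtain ⟨i, rfl⟩ : ∃ i, a = i + 1 := ⟨a - 1, by omega⟩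
        have hipl : i + 1 ≤ p := hle _ (by simp)
        refine ⟨i, by omega, t, (ih (i+1) t).mpr ⟨⟨hc.tail, fun x hx => hpos x (by simp [hx])⟩,
          by simpa using hlen, parts_le_head hc⟩, rfl⟩

noncomputable def S (p m : ℕ) : Polynomial ℤ :=
  ∑ l ∈ boxF p m, (X : Polynomial ℤ) ^ l.sum

lemma S_zero_right (p : ℕ) : S p 0 = 1 := by simp [S, boxF]

lemma S_zero_left (m : ℕ) : S 0 m = 1 := by
  cases m with
  | zero => exact S_zero_right 0
  | succ m => simp [S, boxF]

lemma nil_not_mem_biUnion (p m : ℕ) :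
    ([] : List ℕ) ∉ (Finset.range p).biUnion
      (fun i => (boxF (i+1) m).image (fun l => (i+1) :: l)) := by
  simp

lemma S_rec (p m : ℕ) : S (p+1) (m+1) = S p (m+1) + X ^ (p+1) * S (p+1) m := by
  have hdisj : ∀ q, Disjoint
      ((boxF (q+1) m).image (fun l => (q+1) :: l))
      ((Finset.range q).biUnion (fun i => (boxF (i+1) m).image (fun l => (i+1) :: l))) := by
    intro q
    rw [Finset.disjoint_left]
    rintro l hl hl'
    simp only [Finset.mem_image] at hl
    obtain ⟨t, _, rfl⟩ := hl
    simp only [Finset.mem_biUnion, Finset.mem_image, Finset.mem_range] at hl'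
    obtain ⟨i, hi, t', _, heq⟩ := hl'
    have : i + 1 = q + 1 := by exact (List.cons.injEq _ _ _ _ ▸ heq).1
    omega
  have key : (Finset.range (p+1)).biUnion
      (fun i => (boxF (i+1) m).image (fun l => (i+1) :: l)) =
      ((boxF (p+1) m).image (fun l => (p+1) :: l)) ∪
      ((Finset.range p).biUnion (fun i => (boxF (i+1) m).image (fun l => (i+1) :: l))) := by
    rw [Finset.range_add_one, Finset.biUnion_insert]
  have hS : ∀ q, S q (m+1) = X ^ [].sum + ∑ l ∈ (Finset.range q).biUnion
      (fun i => (boxF (i+1) m).image (fun l => (i+1) :: l)), (X : Polynomial ℤ) ^ l.sum := by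
    intro q
    simp only [S]
    rw [show boxF q (m+1) = insert []
        ((Finset.range q).biUnion (fun i => (boxF (i+1) m).image (fun l => (i+1) :: l)))
        from rfl, Finset.sum_insert (nil_not_mem_biUnion _ _)]
  rw [hS (p+1), hS p, key, Finset.sum_union (hdisj p),
    Finset.sum_image (by intro a _ b _ h; exact (List.cons.injEq _ _ _ _ ▸ h).2)]
  have hx : ∀ l : List ℕ, (X : Polynomial ℤ) ^ ((p+1) :: l).sum = X ^ (p+1) * X ^ l.sum := by
    intro l; rw [List.sum_cons, pow_add]
  simp_rw [hx]
  rw [S, Finset.mul_sum]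
  ring

lemma main (p : ℕ) : ∀ m : ℕ,
    S p m * (∏ k ∈ Finset.range m, ((X : Polynomial ℤ) ^ (k + 1) - 1)) =
    ∏ k ∈ Finset.range m, ((X : Polynomial ℤ) ^ (p + (k + 1)) - 1) := by
  induction p with
  | zero => intro m; rw [S_zero_left, one_mul]; simp
  | succ p ih =>
    intro m
    induction m with
    | zero => simp [S_zero_right]
    | succ m ihm =>
      have hN : (∏ k ∈ Finset.range (m+1), ((X : Polynomial ℤ) ^ (p + (k + 1)) - 1)) =
          (∏ k ∈ Finset.range m, ((X : Polynomial ℤ) ^ (p + 1 + (k + 1)) - 1)) *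
            (X ^ (p+1) - 1) := by
        rw [Finset.prod_range_succ']
        congr 1
        exact Finset.prod_congr rfl fun k _ => by rw [show p + (k+1+1) = p+1+(k+1) by ring]
      rw [S_rec, add_mul, ih (m+1), hN, Finset.prod_range_succ, Finset.prod_range_succ]
      linear_combination ((X : Polynomial ℤ) ^ (p+1) * ((X : Polynomial ℤ) ^ (m+1) - 1)) * ihm

end BoxAux

/-- The generating function of partitions inside a `p × m` box, weighted by
size, equals the Gaussian binomial coefficient
`[p+m, m]_t = (t^{p+1}-1)⋯(t^{p+m}-1) / ((t-1)⋯(t^m-1))`, stated here after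
clearing denominators. -/
theorem partitions_in_box_gauss (p m : ℕ) :
    (∑ᶠ l ∈ {l : List ℕ | DK.IsPartition l ∧ l.length ≤ m ∧ ∀ x ∈ l, x ≤ p},
        (Polynomial.X : Polynomial ℤ) ^ l.sum) *
      (∏ k ∈ Finset.range m, ((Polynomial.X : Polynomial ℤ) ^ (k + 1) - 1)) =
    ∏ k ∈ Finset.range m, ((Polynomial.X : Polynomial ℤ) ^ (p + (k + 1)) - 1) := by
  have hset : {l : List ℕ | DK.IsPartition l ∧ l.length ≤ m ∧ ∀ x ∈ l, x ≤ p}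
      = ↑(BoxAux.boxF p m) := by
    ext l; simp [BoxAux.mem_boxF]
  rw [hset, finsum_mem_coe_finset]
  exact BoxAux.main p m
end

section
/- Let $\mu$ be a partition of $N$ and $\lambda$ a partition of $N$ with at most $n$ parts. Let $(\nu, J)$ be an $L(\mu)$-rigged configuration of type $A_{n-1}$ satisfying: (1) $|\nu^{(a)}| = \sum_{j > a} \lambda_j$ for $1 \leq a \leq n-1$, and (2') $p_i^{(a)} \geq 0$ whenever $m_i^{(a)} > 0$. Then $p_i^{(a)} \geq 0$ for ALL pairs $(a, i)$ with $1 \leq a \leq n-1$ and $i \geq 1$. -/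
namespace VacAux

lemma qi_cons (i x : ℕ) (xs : List ℕ) :
    DK.Qi i (x :: xs) = ((min i x : ℕ) : ℤ) + DK.Qi i xs := by
  simp [DK.Qi]

lemma qi_zero (l : List ℕ) : DK.Qi 0 l = 0 := by
  induction l with
  | nil => simp [DK.Qi]
  | cons x xs ih => rw [qi_cons]; simp [ih]

lemma qi_concave (m : ℕ) (l : List ℕ) :
    DK.Qi m l + DK.Qi (m+2) l + (l.count (m+1) : ℤ) = 2 * DK.Qi (m+1) l := by
  induction l with
  | nil => simp [DK.Qi]
  | cons x xs ih =>
    rw [qi_cons, qi_cons, qi_cons, List.count_cons]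
    by_cases hx : x = m + 1 <;> simp [hx] <;> push_cast <;> omega

lemma qi_sum (i : ℕ) (l : List ℕ) (h : ∀ x ∈ l, x ≤ i) : DK.Qi i l = (l.sum : ℤ) := by
  induction l with
  | nil => simp [DK.Qi]
  | cons x xs ih =>
    rw [qi_cons, min_eq_right (h x (by simp)), ih (fun y hy => h y (by simp [hy]))]
    simp

lemma mem_le_sum {l : List ℕ} {x : ℕ} (h : x ∈ l) : x ≤ l.sum := by
  induction l with
  | nil => simp at h
  | cons y ys ih =>
    simp at h
    rcases h with rfl | h
    · simp
    · have := ih h; simp; omega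

lemma drop_sum (l : List ℕ) (j : ℕ) :
    (l.drop j).sum = l.getD j 0 + (l.drop (j+1)).sum := by
  by_cases h : j < l.length
  · rw [List.drop_eq_getElem_cons h, List.sum_cons, List.getD_eq_getElem l 0 h]
  · rw [List.drop_eq_nil_of_le (by omega), List.drop_eq_nil_of_le (by omega),
        List.getD_eq_default l 0 (by omega)]
    simp

lemma partition_getD_anti {l : List ℕ} (h : List.Chain' (fun a b => b ≤ a) l) (j : ℕ) :
    l.getD (j+1) 0 ≤ l.getD j 0 := by
  by_cases hj : j + 1 < l.length
  · have := List.isChain_iff_getElem.mp h j (by omega)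
    rw [List.getD_eq_getElem l 0 (by omega : j + 1 < l.length),
        List.getD_eq_getElem l 0 (by omega : j < l.length)]
    simpa [List.get_eq_getElem] using this
  · rw [List.getD_eq_default l 0 (by omega)]; exact Nat.zero_le _

end VacAux

/-- Lemma 4.4.1: if a configuration has `|ν^{(a)}| = Σ_{j>a} λ_j` and its
vacancy numbers are nonnegative wherever `m_i^{(a)} > 0`, then all vacancy
numbers are nonnegative. -/
theorem vacancy_nonneg_everywhere (n N : ℕ) (lam mu : List ℕ) (nu : ℕ → List ℕ)
    (hn : 1 ≤ n)
    (hlam : DK.IsPartition lam) (hlsum : lam.sum = N) (hllen : lam.length ≤ n)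
    (hmu : DK.IsPartition mu) (hmusum : mu.sum = N)
    (hpart : ∀ a, DK.IsPartition (nu a))
    (h0 : nu 0 = mu) (htop : ∀ a, n ≤ a → nu a = [])
    (hsize : ∀ a, 1 ≤ a → a ≤ n - 1 → (nu a).sum = (lam.drop a).sum)
    (h2' : ∀ a i, 1 ≤ a → a ≤ n - 1 → 1 ≤ i → 0 < (nu a).count i →
      0 ≤ DK.pVac nu a i) :
    ∀ a i, 1 ≤ a → a ≤ n - 1 → 1 ≤ i → 0 ≤ DK.pVac nu a i := by
  classical
  intro a i ha1 ha2 hi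
  set P : ℕ → ℤ := fun j => DK.pVac nu a j with hP
  have hP0 : P 0 = 0 := by
    simp [hP, DK.pVac, VacAux.qi_zero]
  have hconc : ∀ m, (nu a).count (m+1) = 0 → P m + P (m+2) ≤ 2 * P (m+1) := by
    intro m hm
    have h1 := VacAux.qi_concave m (nu (a-1))
    have h2 := VacAux.qi_concave m (nu a)
    have h3 := VacAux.qi_concave m (nu (a+1))
    rw [hm] at h2
    have c1 : (0:ℤ) ≤ ((nu (a-1)).count (m+1) : ℤ) := Nat.cast_nonneg _
    have c3 : (0:ℤ) ≤ ((nu (a+1)).count (m+1) : ℤ) := Nat.cast_nonneg _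
    simp only [hP, DK.pVac]
    push_cast at h2
    linarith
  set M := (nu (a-1)).sum + (nu a).sum + (nu (a+1)).sum with hM
  have hPM : ∀ j, M ≤ j → 0 ≤ P j := by
    intro j hj
    have b1 : ∀ x ∈ nu (a-1), x ≤ j := fun x hx => by
      have := VacAux.mem_le_sum hx; omega
    have b2 : ∀ x ∈ nu a, x ≤ j := fun x hx => by
      have := VacAux.mem_le_sum hx; omega
    have b3 : ∀ x ∈ nu (a+1), x ≤ j := fun x hx => by
      have := VacAux.mem_le_sum hx; omega
    have q1 := VacAux.qi_sum j (nu (a-1)) b1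
    have q2 := VacAux.qi_sum j (nu a) b2
    have q3 := VacAux.qi_sum j (nu (a+1)) b3
    have e2 : (nu a).sum = (lam.drop a).sum := hsize a ha1 ha2
    have e1 : (nu (a-1)).sum = (lam.drop (a-1)).sum := by
      rcases Nat.eq_or_lt_of_le ha1 with h | h
      · have ha0 : a - 1 = 0 := by omega
        rw [ha0, h0, hmusum, ← hlsum, List.drop_zero]
      · exact hsize (a-1) (by omega) (by omega)
    have e3 : (nu (a+1)).sum = (lam.drop (a+1)).sum := by
      by_cases h : a + 1 ≤ n - 1
      · exact hsize (a+1) (by omega) h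
      · rw [htop (a+1) (by omega), List.drop_eq_nil_of_le (by omega)]
    have t1 := VacAux.drop_sum lam (a-1)
    have t2 := VacAux.drop_sum lam a
    have ha' : a - 1 + 1 = a := by omega
    rw [ha'] at t1
    have hdec := VacAux.partition_getD_anti hlam.1 (a-1)
    rw [ha'] at hdec
    simp only [hP, DK.pVac, q1, q2, q3, e1, e2, e3]
    omega
  set B := M + i with hB
  have hQex : ∃ j, j ≤ B ∧ ∀ k, k ≤ B → P j ≤ P k := by
    obtain ⟨j, hj, hjm⟩ := Finset.exists_min_image (Finset.range (B+1)) P ⟨0, by simp⟩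
    exact ⟨j, Nat.lt_succ_iff.mp (Finset.mem_range.mp hj),
      fun k hk => hjm k (Finset.mem_range.mpr (by omega))⟩
  set j0 := Nat.find hQex with hj0
  have hspec := Nat.find_spec hQex
  rw [← hj0] at hspec
  rcases le_or_gt 0 (P j0) with hpos | hneg
  · exact le_trans hpos (hspec.2 i (by omega))
  · exfalso
    have hne0 : j0 ≠ 0 := by
      intro h
      rw [h, hP0] at hneg
      exact absurd hneg (by norm_num)
    have hneB : j0 ≠ B := by
      intro h
      have := hPM B (by omega)
      rw [← h] at this
      linarith
    have hj0B : j0 + 1 ≤ B := by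
      have := hspec.1; omega
    have hcnt : (nu a).count j0 = 0 := by
      by_contra h
      have hge : (0:ℤ) ≤ P j0 :=
        h2' a j0 ha1 ha2 (by omega) (Nat.pos_of_ne_zero h)
      linarith
    have e1 : j0 - 1 + 1 = j0 := by omega
    have e2 : j0 - 1 + 2 = j0 + 1 := by omega
    have hc := hconc (j0 - 1) (by rw [e1]; exact hcnt)
    rw [e1, e2] at hc
    have h1 : P j0 ≤ P (j0 + 1) := hspec.2 (j0+1) hj0B
    have hQ : (j0 - 1) ≤ B ∧ ∀ k, k ≤ B → P (j0-1) ≤ P k := by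
      refine ⟨by omega, fun k hk => ?_⟩
      have := hspec.2 k hk
      linarith
    exact Nat.find_min hQex (by omega : j0 - 1 < j0) hQ
end

section
/- Let $\Bla = (\lambda', \lambda'')$ with $\lambda' = (\lambda'_1,\ldots,\lambda'_s)$, $\lambda'' = (\lambda''_1,\ldots,\lambda''_t)$, $s+t \leq n$, and choose an integer $m \geq N$ where $N = |\lambda'| + |\lambda''|$. Set $\xi = (\lambda'_1 + m, \ldots, \lambda'_s + m, \lambda''_1, \ldots, \lambda''_t)$ and $\rho = (m^s)$. Then an $L(\mu)$-rigged configuration $(\nu,J)$ with $|\nu^{(a)}| = \sum_{j \geq a+1}(\xi_j - \rho_j)$ for all $a$ satisfies $\widetilde{p}_i^{(a)} := p_i^{(a)} + \delta_{a,s}\min(i,m) \geq 0$ for all $(a,i)$ if and only if $p_i^{(a)} + \delta_{a,s}\, i \geq 0$ for all $(a,i)$ with $m_i^{(a)} \neq 0$; in particular $\min(i,m) = i$ can be used whenever it matters, so $\mathrm{QM}(\mu, \xi - \rho) = \mathrm{QM}(\mu, \Bla)$ independently of the choice of $m \geq N$. -/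
namespace DKAux
open DK

lemma qiM_zero (X : Multiset ℕ) : QiM 0 X = 0 := by
  simp [QiM, Nat.min_comm]

lemma qiM_add (i : ℕ) (X Y : Multiset ℕ) : QiM i (X + Y) = QiM i X + QiM i Y := by
  simp [QiM]

lemma qiM_singleton (i m : ℕ) : QiM i {m} = ((min i m : ℕ) : ℤ) := by
  simp [QiM]

lemma qiM_second_nat (k : ℕ) (X : Multiset ℕ) :
    2 * (X.map (fun x => min (k+1) x)).sum =
      (X.map (fun x => min k x)).sum + (X.map (fun x => min (k+2) x)).sum + X.count (k+1) := by
  induction X using Multiset.induction with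
  | empty => simp
  | cons a X ih =>
    simp only [Multiset.map_cons, Multiset.sum_cons, Multiset.count_cons]
    have hmin : 2 * min (k+1) a = min k a + min (k+2) a + (if a = k+1 then 1 else 0) := by
      rcases eq_or_ne a (k+1) with h | h
      · rw [if_pos h]; omega
      · rw [if_neg h]; omega
    rcases eq_or_ne a (k+1) with h | h
    · rw [if_pos h] at hmin; rw [if_pos h.symm]; omega
    · rw [if_neg h] at hmin; rw [if_neg (fun hh => h hh.symm)]; omega

lemma qiM_second (k : ℕ) (X : Multiset ℕ) :
    2 * QiM (k+1) X = QiM k X + QiM (k+2) X + (X.count (k+1) : ℤ) := by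
  unfold QiM
  exact_mod_cast congrArg (fun x : ℕ => (x : ℤ)) (qiM_second_nat k X)

lemma qiM_sat (K : ℕ) (X : Multiset ℕ) (h : ∀ x ∈ X, x ≤ K) {i : ℕ} (hi : K ≤ i) :
    QiM i X = (X.sum : ℤ) := by
  unfold QiM
  congr 1
  rw [Multiset.map_congr rfl (fun x hx => min_eq_right ((h x hx).trans hi)), Multiset.map_id']

lemma key (A B C : Multiset ℕ) (K : ℕ)
    (hA : ∀ x ∈ A, x ≤ K) (hB : ∀ x ∈ B, x ≤ K) (hC : ∀ x ∈ C, x ≤ K)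
    (hK : 0 ≤ QiM K A - 2 * QiM K B + QiM K C)
    (hocc : ∀ i, 1 ≤ i → B.count i ≠ 0 → 0 ≤ QiM i A - 2 * QiM i B + QiM i C) :
    ∀ i, 0 ≤ QiM i A - 2 * QiM i B + QiM i C := by
  set g : ℕ → ℤ := fun i => QiM i A - 2 * QiM i B + QiM i C with hg
  have hgdef : ∀ i, g i = QiM i A - 2 * QiM i B + QiM i C := fun _ => rfl
  have gsat : ∀ i, K ≤ i → g i = g K := by
    intro i hi
    simp only [hgdef, qiM_sat K A hA hi, qiM_sat K B hB hi, qiM_sat K C hC hi,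
      qiM_sat K A hA (le_refl K), qiM_sat K B hB (le_refl K), qiM_sat K C hC (le_refl K)]
  have g0 : g 0 = 0 := by simp [hgdef, qiM_zero]
  have step : ∀ i, 0 ≤ g i ∨ (g (i+1) ≤ g i ∧ g i < 0) := by
    intro i
    induction i with
    | zero => left; omega
    | succ i ih =>
      by_cases hpos : 0 ≤ g (i+1)
      · exact Or.inl hpos
      have hneg : g (i+1) < 0 := by omega
      have hcnt : B.count (i+1) = 0 := by
        by_contra hc
        exact hpos ((hgdef (i+1)) ▸ hocc (i+1) (by omega) hc)
      have hA2 := qiM_second i A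
      have hB2 := qiM_second i B
      have hC2 := qiM_second i C
      have h2 : 2 * g (i+1) = g i + g (i+2) +
          ((A.count (i+1) : ℤ) - 2 * (B.count (i+1) : ℤ) + (C.count (i+1) : ℤ)) := by
        simp only [hgdef]
        have : i + 1 + 1 = i + 2 := by omega
        rw [this]; linarith
      have hconv : g (i+2) ≤ 2 * g (i+1) - g i := by
        have c1 : (0:ℤ) ≤ (A.count (i+1) : ℤ) := by positivity
        have c2 : (0:ℤ) ≤ (C.count (i+1) : ℤ) := by positivity
        rw [hcnt] at h2; push_cast at h2; linarith
      have hle : g (i+1) ≤ g i := by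
        rcases ih with h | ⟨h, h'⟩ <;> linarith
      exact Or.inr ⟨by linarith, hneg⟩
  intro i
  by_contra hcon
  push_neg at hcon
  rw [← hgdef i] at hcon
  have chain : ∀ d, g (i + d) < 0 := by
    intro d
    induction d with
    | zero => simpa using hcon
    | succ d ih =>
      rcases step (i + d) with h | ⟨h, _⟩
      · omega
      · have : i + (d+1) = (i+d) + 1 := by omega
        rw [this]; linarith
  have h1 := chain K
  rw [gsat (i + K) (by omega), hgdef K] at h1
  linarith

lemma drop_sum_step (l : List ℕ) (b : ℕ) : (l.drop b).sum = l.getD b 0 + (l.drop (b+1)).sum := by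
  rcases lt_or_ge b l.length with h | h
  · rw [List.drop_eq_getElem_cons h, List.sum_cons, List.getD_eq_getElem l 0 h]
  · rw [List.drop_eq_nil_of_le h, List.drop_eq_nil_of_le (by omega), List.getD_eq_default l 0 h]
    simp

lemma part_getD {l : List ℕ} (h : List.Chain' (fun a b => b ≤ a) l) (j : ℕ) :
    l.getD (j+1) 0 ≤ l.getD j 0 := by
  rcases lt_or_ge (j+1) l.length with hlt | hge
  · rw [List.getD_eq_getElem l 0 hlt, List.getD_eq_getElem l 0 (by omega)]
    exact List.isChain_iff_getElem.mp h j (by omega)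
  · rw [List.getD_eq_default l 0 hge]; exact Nat.zero_le _

lemma getD_zero_le_sum (l : List ℕ) : l.getD 0 0 ≤ l.sum := by
  cases l with
  | nil => simp
  | cons a l => simp [List.getD]

lemma summap (m : ℕ) (l : List ℕ) : (l.map (· + m)).sum = l.sum + l.length * m := by
  induction l with
  | nil => simp
  | cons a l ih => simp [ih]; ring

lemma sum_drop_le (l : List ℕ) (b : ℕ) : (l.drop b).sum ≤ l.sum := by
  conv_rhs => rw [← List.sum_take_add_sum_drop l b]
  omega

lemma aux (n N s t m : ℕ) (l' l'' mu : List ℕ)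
    (hs : l'.length = s) (ht : l''.length = t) (hst : s + t ≤ n)
    (h1 : DK.IsPartition l') (h2 : DK.IsPartition l'')
    (hN : l'.sum + l''.sum = N) (hmusum : mu.sum = N) (hm : N ≤ m)
    (RC : ℕ → Multiset (ℕ × ℤ)) (hval : DK.RCvalid n RC)
    (hsum : ∀ a, 1 ≤ a → a ≤ n - 1 →
        ((RC a).map Prod.fst).sum =
          ((l'.map (· + m) ++ l'').drop a).sum - ((List.replicate s m).drop a).sum) :
    (∀ b i, i ∈ DK.nuOf mu RC b → i ≤ m) ∧
    ((∀ a i, 1 ≤ a → a ≤ n - 1 → 1 ≤ i →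
        0 ≤ DK.pRC mu RC a i + (if a = s then (min i m : ℤ) else 0)) ↔
      (∀ a i, 1 ≤ a → a ≤ n - 1 → 1 ≤ i → (DK.nuOf mu RC a).count i ≠ 0 →
        0 ≤ DK.pRC mu RC a i + (if a = s then (i : ℤ) else 0))) := by
  obtain ⟨hv0, hvn, hvpos⟩ := hval
  set fN : ℕ → ℕ := fun b => (l'.drop b).sum + (l''.drop (b - s)).sum with hfN
  -- the ℕ-subtraction in the size condition computes to fN
  have hsub : ∀ a, ((l'.map (· + m) ++ l'').drop a).sum - ((List.replicate s m).drop a).sum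
      = fN a := by
    intro a
    rw [List.drop_append, List.sum_append, ← List.map_drop, List.drop_replicate,
      summap, List.sum_replicate, List.length_drop, List.length_map, hs, smul_eq_mul]
    simp only [hfN]
    omega
  have fN0 : fN 0 = N := by simp [hfN, hN]
  have fNtop : ∀ b, n ≤ b → fN b = 0 := by
    intro b hb
    simp only [hfN]
    rw [List.drop_eq_nil_of_le (by omega), List.drop_eq_nil_of_le (by omega)]
    simp
  have nusum : ∀ b, b ≤ n → (DK.nuOf mu RC b).sum = fN b := by
    intro b hb
    rcases Nat.eq_zero_or_pos b with rfl | hb1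
    · simpa [DK.nuOf, hmusum] using fN0.symm
    by_cases hb2 : b ≤ n - 1
    · have := hsum b hb1 hb2
      rw [hsub b] at this
      simpa [DK.nuOf, Nat.pos_iff_ne_zero.mp hb1] using this
    · have hbn : b = n := by omega
      rw [DK.nuOf, if_neg (by omega), hvn b (by omega)]
      simp [hbn, fNtop n le_rfl]
  have fNstep : ∀ b, fN b =
      (if b < s then l'.getD b 0 else l''.getD (b - s) 0) + fN (b+1) := by
    intro b
    by_cases hb : b < s
    · rw [if_pos hb]
      simp only [hfN]
      have e1 : (l'.drop b).sum = l'.getD b 0 + (l'.drop (b+1)).sum := drop_sum_step l' b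
      have e2 : b - s = 0 := by omega
      have e3 : b + 1 - s = 0 := by omega
      rw [e2, e3]; omega
    · rw [if_neg hb]
      simp only [hfN]
      have e1 : l'.drop b = [] := List.drop_eq_nil_of_le (by omega)
      have e1' : l'.drop (b+1) = [] := List.drop_eq_nil_of_le (by omega)
      have e2 : (l''.drop (b - s)).sum = l''.getD (b - s) 0 + (l''.drop (b - s + 1)).sum :=
        drop_sum_step l'' (b - s)
      have e3 : b + 1 - s = b - s + 1 := by omega
      rw [e1, e1', e3]; omega
  have fNle : ∀ b, fN b ≤ N := by
    intro b
    have := sum_drop_le l' b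
    have := sum_drop_le l'' (b - s)
    simp only [hfN]; omega
  -- every part of every nu is at most m
  have memle : ∀ b i, i ∈ DK.nuOf mu RC b → i ≤ m := by
    intro b i hi
    rcases Nat.eq_zero_or_pos b with rfl | hb1
    · have : i ≤ (DK.nuOf mu RC 0).sum := Multiset.le_sum_of_mem hi
      rw [nusum 0 (Nat.zero_le n), fN0] at this; omega
    by_cases hb2 : b ≤ n - 1
    · have h' : i ≤ (DK.nuOf mu RC b).sum := Multiset.le_sum_of_mem hi
      rw [nusum b (by omega)] at h'
      have := fNle b; omega
    · exfalso
      rw [DK.nuOf, if_neg (by omega), hvn b (by omega)] at hi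
      simp at hi
  -- the saturated vacancy number is nonnegative
  have satval : ∀ a, 1 ≤ a → a ≤ n - 1 →
      0 ≤ (fN (a-1) : ℤ) + (if a = s then (m:ℤ) else 0) - 2 * (fN a : ℤ) + (fN (a+1) : ℤ) := by
    intro a ha1 ha2
    have hstep1 : fN (a-1) = (if a - 1 < s then l'.getD (a-1) 0 else l''.getD (a-1-s) 0) + fN a := by
      have := fNstep (a-1)
      rwa [show a - 1 + 1 = a by omega] at this
    have hstep2 : fN a = (if a < s then l'.getD a 0 else l''.getD (a-s) 0) + fN (a+1) :=
      fNstep a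
    have hG : (if a < s then l'.getD a 0 else l''.getD (a-s) 0) ≤
        (if a - 1 < s then l'.getD (a-1) 0 else l''.getD (a-1-s) 0) + (if a = s then m else 0) := by
      rcases lt_trichotomy a s with h | h | h
      · rw [if_pos h, if_pos (by omega), if_neg (by omega)]
        have := part_getD h1.1 (a-1)
        rw [show a - 1 + 1 = a by omega] at this
        omega
      · rw [if_neg (by omega), if_pos h, show a - s = 0 by omega]
        have := getD_zero_le_sum l''
        omega
      · rw [if_neg (by omega), if_neg (by omega), if_neg (by omega),
          show a - s = (a - 1 - s) + 1 by omega]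
        have := part_getD h2.1 (a-1-s)
        omega
    rcases eq_or_ne a s with h | h
    · rw [if_pos h] at *
      push_cast
      omega
    · rw [if_neg h] at *
      push_cast
      omega
  refine ⟨memle, ?_, ?_⟩
  · -- forward direction
    intro h a i ha1 ha2 hi hcnt
    have hmem : i ∈ DK.nuOf mu RC a := by
      rwa [← Multiset.count_pos, Nat.pos_iff_ne_zero]
    have him : i ≤ m := memle a i hmem
    have := h a i ha1 ha2 hi
    rcases eq_or_ne a s with has | has
    · rw [if_pos has] at this ⊢
      rwa [show (min (i:ℤ) (m:ℤ)) = (i:ℤ) by omega] at this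
    · rw [if_neg has] at this ⊢
      exact this
  · -- backward direction
    intro h a i ha1 ha2 hi
    set A : Multiset ℕ := DK.nuOf mu RC (a-1) + (if a = s then {m} else 0) with hAdef
    set B : Multiset ℕ := DK.nuOf mu RC a with hBdef
    set C : Multiset ℕ := DK.nuOf mu RC (a+1) with hCdef
    have hptil : ∀ j, DK.pRC mu RC a j + (if a = s then (min (j:ℤ) (m:ℤ)) else 0)
        = DK.QiM j A - 2 * DK.QiM j B + DK.QiM j C := by
      intro j
      rcases eq_or_ne a s with has | has
      · rw [if_pos has, hAdef, if_pos has, qiM_add, qiM_singleton, DK.pRC]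
        push_cast [Nat.cast_min]
        ring
      · rw [if_neg has, hAdef, if_neg has, DK.pRC]
        simp [DK.QiM, hBdef, hCdef]
    have hA : ∀ x ∈ A, x ≤ m := by
      intro x hx
      rw [hAdef, Multiset.mem_add] at hx
      rcases hx with hx | hx
      · exact memle (a-1) x hx
      · rcases eq_or_ne a s with has | has
        · rw [if_pos has, Multiset.mem_singleton] at hx; omega
        · rw [if_neg has] at hx; simp at hx
    have hB : ∀ x ∈ B, x ≤ m := fun x hx => memle a x hx
    have hC : ∀ x ∈ C, x ≤ m := fun x hx => memle (a+1) x hx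
    have hAsum : (A.sum : ℤ) = (fN (a-1) : ℤ) + (if a = s then (m:ℤ) else 0) := by
      rw [hAdef, Multiset.sum_add, nusum (a-1) (by omega)]
      rcases eq_or_ne a s with has | has
      · rw [if_pos has, if_pos has]; push_cast; simp
      · rw [if_neg has, if_neg has]; push_cast; simp
    have hK : 0 ≤ DK.QiM m A - 2 * DK.QiM m B + DK.QiM m C := by
      rw [qiM_sat m A hA le_rfl, qiM_sat m B hB le_rfl, qiM_sat m C hC le_rfl,
        hAsum, hBdef, hCdef, nusum a (by omega), nusum (a+1) (by omega)]
      exact satval a ha1 ha2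
    have hocc : ∀ j, 1 ≤ j → B.count j ≠ 0 → 0 ≤ DK.QiM j A - 2 * DK.QiM j B + DK.QiM j C := by
      intro j hj hcnt
      rw [← hptil j]
      have hmem : j ∈ B := by rwa [← Multiset.count_pos, Nat.pos_iff_ne_zero]
      have hjm : j ≤ m := hB j hmem
      have := h a j ha1 ha2 hj (by rwa [← hBdef])
      rcases eq_or_ne a s with has | has
      · rw [if_pos has] at this ⊢
        rw [show (min (j:ℤ) (m:ℤ)) = (j:ℤ) by omega]
        exact this
      · rw [if_neg has] at this ⊢
        exact this
    have := key A B C m hA hB hC hK hocc i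
    rw [← hptil i] at this
    exact this

end DKAux


/-- The content of the proof of Lemma 4.8.1: with `ξ = (λ'_1+m, …, λ'_s+m,
λ''_1, …, λ''_t)` and `ρ = (m^s)` for `m ≥ N`, an `L(μ)`-rigged configuration
with `|ν^{(a)}| = Σ_{j≥a+1}(ξ_j - ρ_j)` has all
`p̃_i^{(a)} = p_i^{(a)} + δ_{a,s} min(i,m) ≥ 0` if and only if
`p_i^{(a)} + δ_{a,s} i ≥ 0` whenever `m_i^{(a)} ≠ 0`; consequently
`QM(μ, ξ-ρ) = QM(μ, 𝛌)`, independently of the choice of `m ≥ N`. -/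
theorem qm_skew_eq_qm_double (n N s t m : ℕ) (l' l'' mu : List ℕ)
    (hs : l'.length = s) (ht : l''.length = t) (hst : s + t ≤ n)
    (h1 : DK.IsPartition l') (h2 : DK.IsPartition l'')
    (hmu : DK.IsPartition mu)
    (hN : l'.sum + l''.sum = N) (hmusum : mu.sum = N)
    (hm : N ≤ m) :
    (∀ RC : ℕ → Multiset (ℕ × ℤ), DK.RCvalid n RC →
      (∀ a, 1 ≤ a → a ≤ n - 1 →
        ((RC a).map Prod.fst).sum =
          ((l'.map (· + m) ++ l'').drop a).sum - ((List.replicate s m).drop a).sum) →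
      ((∀ a i, 1 ≤ a → a ≤ n - 1 → 1 ≤ i →
          0 ≤ DK.pRC mu RC a i + (if a = s then (min i m : ℤ) else 0)) ↔
        (∀ a i, 1 ≤ a → a ≤ n - 1 → 1 ≤ i → (DK.nuOf mu RC a).count i ≠ 0 →
          0 ≤ DK.pRC mu RC a i + (if a = s then (i : ℤ) else 0)))) ∧
    {RC : ℕ → Multiset (ℕ × ℤ) | DK.RCvalid n RC ∧
        (∀ a, 1 ≤ a → a ≤ n - 1 →
          ((RC a).map Prod.fst).sum =
            ((l'.map (· + m) ++ l'').drop a).sum - ((List.replicate s m).drop a).sum) ∧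
        (∀ a i, 1 ≤ a → a ≤ n - 1 → 1 ≤ i →
          0 ≤ DK.pRC mu RC a i + (if a = s then (min i m : ℤ) else 0)) ∧
        (∀ a str, str ∈ RC a → 0 ≤ str.2 ∧
          str.2 ≤ DK.pRC mu RC a str.1 +
            (if a = s then (min str.1 m : ℤ) else 0))} =
    {RC : ℕ → Multiset (ℕ × ℤ) | DK.RCvalid n RC ∧
        (∀ a, 1 ≤ a → a ≤ n - 1 →
          ((RC a).map Prod.fst).sum =
            ((l'.map (· + m) ++ l'').drop a).sum - ((List.replicate s m).drop a).sum) ∧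
        (∀ a str, str ∈ RC a → 0 ≤ str.2 ∧
          str.2 ≤ DK.pRC mu RC a str.1 +
            (if a = s then (str.1 : ℤ) else 0))} := by
  have AUX := DKAux.aux n N s t m l' l'' mu hs ht hst h1 h2 hN hmusum hm
  constructor
  · intro RC hval hsum
    exact (AUX RC hval hsum).2
  · ext RC
    simp only [Set.mem_setOf_eq]
    have memstr : ∀ (hval : DK.RCvalid n RC) a (str : ℕ × ℤ), str ∈ RC a →
        (1 ≤ a ∧ a ≤ n - 1) ∧ str.1 ∈ DK.nuOf mu RC a := by
      intro hval a str hstr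
      have ha0 : a ≠ 0 := by
        rintro rfl; rw [hval.1] at hstr; simp at hstr
      have han : a < n := by
        by_contra hc
        rw [hval.2.1 a (by omega)] at hstr; simp at hstr
      refine ⟨⟨by omega, by omega⟩, ?_⟩
      rw [DK.nuOf, if_neg ha0]
      exact Multiset.mem_map_of_mem Prod.fst hstr
    constructor
    · rintro ⟨hval, hsum, hvac, hrig⟩
      refine ⟨hval, hsum, ?_⟩
      intro a str hstr
      obtain ⟨memle, hiff⟩ := AUX RC hval hsum
      obtain ⟨⟨ha1, ha2⟩, hmem⟩ := memstr hval a str hstr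
      have hb := hrig a str hstr
      have hstr1 : str.1 ≤ m := memle a str.1 hmem
      rcases eq_or_ne a s with has | has
      · rw [if_pos has] at hb ⊢
        rwa [show (min (str.1:ℤ) (m:ℤ)) = (str.1:ℤ) by omega] at hb
      · rwa [if_neg has] at hb ⊢
    · rintro ⟨hval, hsum, hrig⟩
      obtain ⟨memle, hiff⟩ := AUX RC hval hsum
      have hocc : ∀ a i, 1 ≤ a → a ≤ n - 1 → 1 ≤ i → (DK.nuOf mu RC a).count i ≠ 0 →
          0 ≤ DK.pRC mu RC a i + (if a = s then (i : ℤ) else 0) := by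
        intro a i ha1 ha2 hi hcnt
        have hmem : i ∈ DK.nuOf mu RC a := by
          rwa [← Multiset.count_pos, Nat.pos_iff_ne_zero]
        rw [DK.nuOf, if_neg (by omega)] at hmem
        obtain ⟨str, hstrmem, hfst⟩ := Multiset.mem_map.mp hmem
        have hb := hrig a str hstrmem
        have hstr1 : str.1 ≤ m := memle a str.1 ((memstr hval a str hstrmem).2)
        rw [hfst] at hb
        linarith [hb.1, hb.2]
      refine ⟨hval, hsum, hiff.mpr hocc, ?_⟩
      intro a str hstr
      obtain ⟨⟨ha1, ha2⟩, hmem⟩ := memstr hval a str hstr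
      have hb := hrig a str hstr
      have hstr1 : str.1 ≤ m := memle a str.1 hmem
      rcases eq_or_ne a s with has | has
      · rw [if_pos has] at hb ⊢
        rwa [show (min (str.1:ℤ) (m:ℤ)) = (str.1:ℤ) by omega]
      · rwa [if_neg has] at hb ⊢
end
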